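/- arXiv:2202.02396 — 9 statements merged into one kernel-verified Lean document; each statement's English description precedes it below -/
import Mathlib

section
/- Let X be a nonempty finite type, d : X → ℝ weights with d(x) > 0, φ : X → ℝ^{n_f} a feature map with span S and d-orthogonal projection Ψ onto S, and M a linear operator on X → ℝ with γ ∈ [0,1), κ ≥ 0 satisfying (i) ‖Ψ(M u)‖_d ≤ ‖u‖_d for all u ∈ S and (ii) ‖M v‖_d ≤ κ·‖v‖_d for all v. Let ϕ : X → ℝ^{m} be a second feature map, q : X → ℝ, and q̂ : X → ℝ with ‖q̂ − q‖_d ≤ ((1+γ·κ)/(1−γ))·ε, where ε = ⨅_{ω ∈ ℝ^{m}} ‖(x ↦ ⟪ϕ(x), ω⟫) − q‖_d. Let L : X → ℝ^{n_p} and b ≥ 0 with |L(x)_i| ≤ b for all x, i. Suppose ν : X → ℝ^{n_p} satisfies ν = γ·M(L ⊙ q) + γ·M ν (componentwise) and ν̂ : X → ℝ^{n_p} has every component in S and satisfies ν̂ = Ψ(γ·M(L ⊙ q̂) + γ·M ν̂) (componentwise). Then ‖ν̂ − ν‖_d ≤ γ·n_p·b·κ·((1+γ·κ)/(1−γ)²)·ε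 + ((1+γ·κ)/(1−γ))·⨅_{G ∈ ℝ^{n_f×n_p}} ‖(x ↦ Gᵀφ(x)) − ν‖_d. -/
open Finset

noncomputable def wn {X : Type*} [Fintype X] (d : X → ℝ) (v : X → ℝ) : ℝ :=
  Real.sqrt (∑ x, d x * v x ^ 2)

noncomputable def toE {X : Type*} [Fintype X] (f : X → ℝ) : EuclideanSpace ℝ X :=
  (WithLp.equiv 2 (X → ℝ)).symm f

lemma wn_nonneg {X : Type*} [Fintype X] (d v : X → ℝ) : 0 ≤ wn d v :=
  Real.sqrt_nonneg _

lemma wn_sq {X : Type*} [Fintype X] {d : X → ℝ} (hd : ∀ x, 0 ≤ d x) (v : X → ℝ) :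
    wn d v ^ 2 = ∑ x, d x * v x ^ 2 :=
  Real.sq_sqrt (Finset.sum_nonneg fun x _ => mul_nonneg (hd x) (sq_nonneg _))

lemma wn_eq_norm {X : Type*} [Fintype X] {d : X → ℝ} (hd : ∀ x, 0 ≤ d x) (v : X → ℝ) :
    wn d v = ‖toE (fun x => Real.sqrt (d x) * v x)‖ := by
  rw [EuclideanSpace.norm_eq, wn]
  congr 1
  refine Finset.sum_congr rfl fun x _ => ?_
  have : toE (fun x => Real.sqrt (d x) * v x) x = Real.sqrt (d x) * v x := rfl
  rw [this, Real.norm_eq_abs, sq_abs, mul_pow, Real.sq_sqrt (hd x)]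

lemma wn_add_le {X : Type*} [Fintype X] {d : X → ℝ} (hd : ∀ x, 0 ≤ d x) (u v : X → ℝ) :
    wn d (u + v) ≤ wn d u + wn d v := by
  rw [wn_eq_norm hd, wn_eq_norm hd, wn_eq_norm hd]
  have h : toE (fun x => Real.sqrt (d x) * (u + v) x)
      = toE (fun x => Real.sqrt (d x) * u x) + toE (fun x => Real.sqrt (d x) * v x) := by
    ext x
    show Real.sqrt (d x) * (u x + v x) = Real.sqrt (d x) * u x + Real.sqrt (d x) * v x
    ring
  rw [h]
  exact norm_add_le _ _

lemma wn_mul {X : Type*} [Fintype X] (d : X → ℝ) (c : ℝ) (v : X → ℝ) :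
    wn d (fun x => c * v x) = |c| * wn d v := by
  rw [wn, wn]
  have h : ∑ x, d x * (c * v x) ^ 2 = c ^ 2 * ∑ x, d x * v x ^ 2 := by
    rw [Finset.mul_sum]
    exact Finset.sum_congr rfl fun x _ => by ring
  rw [h, Real.sqrt_mul (sq_nonneg c), Real.sqrt_sq_eq_abs]

lemma wn_smul {X : Type*} [Fintype X] (d : X → ℝ) (c : ℝ) (v : X → ℝ) :
    wn d (c • v) = |c| * wn d v := by
  have h : (c • v) = fun x => c * v x := funext fun x => by
    simp only [Pi.smul_apply, smul_eq_mul]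
  rw [h, wn_mul]

lemma wn_mono {X : Type*} [Fintype X] {d : X → ℝ} (hd : ∀ x, 0 ≤ d x) {u v : X → ℝ}
    (h : ∀ x, |u x| ≤ |v x|) : wn d u ≤ wn d v := by
  apply Real.sqrt_le_sqrt
  refine Finset.sum_le_sum fun x _ => ?_
  have h2 : u x ^ 2 ≤ v x ^ 2 := by
    calc u x ^ 2 = |u x| ^ 2 := (sq_abs _).symm
      _ ≤ |v x| ^ 2 := pow_le_pow_left₀ (abs_nonneg _) (h x) 2
      _ = v x ^ 2 := sq_abs _
  exact mul_le_mul_of_nonneg_left h2 (hd x)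

lemma sum_sq_add {X : Type*} [Fintype X] (d r s : X → ℝ)
    (h : ∑ x, d x * (r x * s x) = 0) :
    ∑ x, d x * (r x + s x) ^ 2 = ∑ x, d x * r x ^ 2 + ∑ x, d x * s x ^ 2 := by
  have e : ∀ x ∈ Finset.univ, d x * (r x + s x) ^ 2
      = (d x * r x ^ 2 + d x * s x ^ 2) + 2 * (d x * (r x * s x)) := fun x _ => by ring
  rw [Finset.sum_congr rfl e, Finset.sum_add_distrib, Finset.sum_add_distrib,
    ← Finset.mul_sum, h]
  ring

/-- Theorem GLS: error bound for the least-squares TD gradient critic. -/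
theorem stmt_0 {X : Type*} [Fintype X] [Nonempty X] {n_f m n_p : ℕ}
    (d : X → ℝ) (hd : ∀ x, 0 < d x)
    (φ : X → Fin n_f → ℝ)
    (Ψ M : (X → ℝ) →ₗ[ℝ] (X → ℝ))
    -- Ψ maps into the span S of the features
    (hΨmem : ∀ v : X → ℝ, ∃ h : Fin n_f → ℝ, Ψ v = fun x => ∑ i, φ x i * h i)
    -- v - Ψ v is d-orthogonal to S : Ψ is the d-orthogonal projection onto S
    (hΨorth : ∀ (v : X → ℝ) (h : Fin n_f → ℝ),
      ∑ x, d x * (v x - Ψ v x) * (∑ i, φ x i * h i) = 0)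
    (γ κ : ℝ) (hγ0 : 0 ≤ γ) (hγ1 : γ < 1) (hκ : 0 ≤ κ)
    -- (i) ‖Ψ (M u)‖_d ≤ ‖u‖_d for all u ∈ S
    (hi : ∀ u : X → ℝ, (∃ h : Fin n_f → ℝ, u = fun x => ∑ i, φ x i * h i) →
      Real.sqrt (∑ x, d x * (Ψ (M u) x) ^ 2) ≤ Real.sqrt (∑ x, d x * (u x) ^ 2))
    -- (ii) ‖M v‖_d ≤ κ·‖v‖_d for all v
    (hii : ∀ v : X → ℝ,
      Real.sqrt (∑ x, d x * (M v x) ^ 2) ≤ κ * Real.sqrt (∑ x, d x * (v x) ^ 2))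
    -- second feature map, true Q function q and its TD approximation q̂
    (ϕ : X → Fin m → ℝ) (q qhat : X → ℝ)
    (hqhat : Real.sqrt (∑ x, d x * (qhat x - q x) ^ 2)
      ≤ ((1 + γ * κ) / (1 - γ)) *
          ⨅ ω : Fin m → ℝ, Real.sqrt (∑ x, d x * ((∑ i, ϕ x i * ω i) - q x) ^ 2))
    (L : X → Fin n_p → ℝ) (b : ℝ) (hb0 : 0 ≤ b)
    (hLb : ∀ x i, |L x i| ≤ b)
    (ν νhat : X → Fin n_p → ℝ)
    -- ν = γ·M(L ⊙ q) + γ·M ν componentwise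
    (hν : ∀ k : Fin n_p, (fun x => ν x k)
      = γ • M (fun x => q x * L x k) + γ • M (fun x => ν x k))
    -- every component of ν̂ lies in S
    (hνhatmem : ∀ k : Fin n_p, ∃ h : Fin n_f → ℝ,
      (fun x => νhat x k) = fun x => ∑ i, φ x i * h i)
    -- ν̂ = Ψ(γ·M(L ⊙ q̂) + γ·M ν̂) componentwise
    (hνhat : ∀ k : Fin n_p, (fun x => νhat x k)
      = Ψ (γ • M (fun x => qhat x * L x k) + γ • M (fun x => νhat x k))) :
    Real.sqrt (∑ x, d x * ∑ k, (νhat x k - ν x k) ^ 2)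
      ≤ γ * n_p * b * κ * ((1 + γ * κ) / (1 - γ) ^ 2) *
          (⨅ ω : Fin m → ℝ, Real.sqrt (∑ x, d x * ((∑ i, ϕ x i * ω i) - q x) ^ 2))
        + ((1 + γ * κ) / (1 - γ)) *
            ⨅ G : Matrix (Fin n_f) (Fin n_p) ℝ,
              Real.sqrt (∑ x, d x * ∑ k, ((∑ i, G i k * φ x i) - ν x k) ^ 2) := by
  have hd' : ∀ x, 0 ≤ d x := fun x => (hd x).le
  have h1γ : 0 < 1 - γ := by linarith
  set ε := ⨅ ω : Fin m → ℝ, Real.sqrt (∑ x, d x * ((∑ i, ϕ x i * ω i) - q x) ^ 2) with hεdef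
  have hε0 : 0 ≤ ε := Real.iInf_nonneg fun _ => Real.sqrt_nonneg _
  have hδ : wn d (fun x => qhat x - q x) ≤ ((1 + γ * κ) / (1 - γ)) * ε := hqhat
  set δ := wn d (fun x => qhat x - q x) with hδdef
  have hδ0 : 0 ≤ δ := wn_nonneg _ _
  -- Ψ is nonexpansive
  have hΨle : ∀ z : X → ℝ, wn d (Ψ z) ≤ wn d z := by
    intro z
    obtain ⟨h, hh⟩ := hΨmem z
    have hhx : ∀ x, Ψ z x = ∑ i, φ x i * h i := fun x => by rw [hh]
    have horth : ∑ x, d x * (Ψ z x * (z x - Ψ z x)) = 0 := by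
      have h2 := hΨorth z h
      rw [← h2]
      exact Finset.sum_congr rfl fun x _ => by rw [hhx x]; ring
    have hpy := sum_sq_add d (fun x => Ψ z x) (fun x => z x - Ψ z x) horth
    apply Real.sqrt_le_sqrt
    have hz : ∑ x, d x * z x ^ 2
        = ∑ x, d x * (Ψ z x) ^ 2 + ∑ x, d x * (z x - Ψ z x) ^ 2 := by
      rw [← hpy]
      exact Finset.sum_congr rfl fun x _ => by ring
    have hnn : 0 ≤ ∑ x, d x * (z x - Ψ z x) ^ 2 :=
      Finset.sum_nonneg fun x _ => mul_nonneg (hd' x) (sq_nonneg _)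
    rw [hz]
    linarith [le_refl (∑ x, d x * (Ψ z x) ^ 2)]
  -- projection optimality
  have hproj : ∀ (w : X → ℝ) (g : Fin n_f → ℝ),
      ∑ x, d x * (Ψ w x - w x) ^ 2 ≤ ∑ x, d x * ((∑ i, φ x i * g i) - w x) ^ 2 := by
    intro w g
    obtain ⟨h, hh⟩ := hΨmem w
    have hhx : ∀ x, Ψ w x = ∑ i, φ x i * h i := fun x => by rw [hh]
    have hcross : ∑ x, d x * (((∑ i, φ x i * g i) - Ψ w x) * (Ψ w x - w x)) = 0 := by
      have h2 := hΨorth w (fun i => g i - h i)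
      have h3 : ∀ x, (∑ i, φ x i * (g i - h i))
          = (∑ i, φ x i * g i) - ∑ i, φ x i * h i := fun x => by
        rw [← Finset.sum_sub_distrib]
        exact Finset.sum_congr rfl fun i _ => by ring
      have h4 : ∀ x ∈ Finset.univ, d x * (((∑ i, φ x i * g i) - Ψ w x) * (Ψ w x - w x))
          = -(d x * (w x - Ψ w x) * (∑ i, φ x i * (g i - h i))) := by
        intro x _
        rw [h3 x, hhx x]
        ring
      rw [Finset.sum_congr rfl h4, Finset.sum_neg_distrib, h2, neg_zero]
    have hpy := sum_sq_add d (fun x => (∑ i, φ x i * g i) - Ψ w x)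
      (fun x => Ψ w x - w x) hcross
    have key : ∑ x, d x * ((∑ i, φ x i * g i) - w x) ^ 2
        = ∑ x, d x * ((∑ i, φ x i * g i) - Ψ w x) ^ 2 + ∑ x, d x * (Ψ w x - w x) ^ 2 := by
      rw [← hpy]
      exact Finset.sum_congr rfl fun x _ => by ring
    have hnn : 0 ≤ ∑ x, d x * ((∑ i, φ x i * g i) - Ψ w x) ^ 2 :=
      Finset.sum_nonneg fun x _ => mul_nonneg (hd' x) (sq_nonneg _)
    rw [key]
    linarith
  -- per-component bound
  have hk : ∀ k : Fin n_p,
      wn d (fun x => νhat x k - ν x k)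
        ≤ γ * κ * b * δ / (1 - γ)
          + ((1 - γ + γ * κ) / (1 - γ)) * wn d (fun x => Ψ (fun y => ν y k) x - ν x k) := by
    intro k
    have hu : (fun x => νhat x k)
        = γ • Ψ (M (fun x => qhat x * L x k)) + γ • Ψ (M (fun x => νhat x k)) := by
      have h0 := hνhat k
      rw [map_add, map_smul, map_smul] at h0
      exact h0
    have hw : Ψ (fun y => ν y k)
        = γ • Ψ (M (fun x => q x * L x k)) + γ • Ψ (M (fun y => ν y k)) := by
      have h0 := congrArg (fun t => Ψ t) (hν k)
      simp only [map_add, map_smul] at h0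
      exact h0
    have hA : (fun y => (qhat y - q y) * L y k)
        = (fun x => qhat x * L x k) - (fun x => q x * L x k) := by
      funext y
      show _ = qhat y * L y k - q y * L y k
      ring
    have hE : (fun y => νhat y k - Ψ (fun z => ν z k) y)
        = (fun x => νhat x k) - Ψ (fun z => ν z k) := rfl
    have hR : (fun y => Ψ (fun z => ν z k) y - ν y k)
        = Ψ (fun z => ν z k) - (fun z => ν z k) := rfl
    have key : ∀ x, νhat x k - Ψ (fun y => ν y k) x
        = (γ • Ψ (M (fun y => (qhat y - q y) * L y k))
            + γ • Ψ (M (fun y => νhat y k - Ψ (fun z => ν z k) y))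
            + γ • Ψ (M (fun y => Ψ (fun z => ν z k) y - ν y k))) x := by
      intro x
      rw [hA, hE, hR]
      simp only [map_sub, Pi.add_apply, Pi.sub_apply, Pi.smul_apply, smul_eq_mul]
      have hux := congrFun hu x
      have hwx := congrFun hw x
      simp only [Pi.add_apply, Pi.smul_apply, smul_eq_mul] at hux hwx
      linear_combination hux - hwx
    -- membership of the error in S
    have hES : ∃ h : Fin n_f → ℝ,
        (fun y => νhat y k - Ψ (fun z => ν z k) y) = fun x => ∑ i, φ x i * h i := by
      obtain ⟨h1, hh1⟩ := hνhatmem k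
      obtain ⟨h2, hh2⟩ := hΨmem (fun z => ν z k)
      refine ⟨fun i => h1 i - h2 i, funext fun x => ?_⟩
      rw [show νhat x k = ∑ i, φ x i * h1 i from congrFun hh1 x,
        show Ψ (fun z => ν z k) x = ∑ i, φ x i * h2 i from congrFun hh2 x,
        ← Finset.sum_sub_distrib]
      exact Finset.sum_congr rfl fun i _ => by ring
    set Efun : X → ℝ := fun y => νhat y k - Ψ (fun z => ν z k) y with hEfun
    set Rfun : X → ℝ := fun y => Ψ (fun z => ν z k) y - ν y k with hRfun
    set Dfun : X → ℝ := fun y => (qhat y - q y) * L y k with hDfun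
    -- split
    have hsplit : wn d Efun
        ≤ wn d (γ • Ψ (M Dfun)) + wn d (γ • Ψ (M Efun)) + wn d (γ • Ψ (M Rfun)) := by
      have h1 : Efun = γ • Ψ (M Dfun) + γ • Ψ (M Efun) + γ • Ψ (M Rfun) := funext key
      calc wn d Efun = wn d (γ • Ψ (M Dfun) + γ • Ψ (M Efun) + γ • Ψ (M Rfun)) :=
            congrArg (wn d) h1
        _ ≤ wn d (γ • Ψ (M Dfun) + γ • Ψ (M Efun)) + wn d (γ • Ψ (M Rfun)) :=
            wn_add_le hd' _ _
        _ ≤ wn d (γ • Ψ (M Dfun)) + wn d (γ • Ψ (M Efun)) + wn d (γ • Ψ (M Rfun)) := by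
            have := wn_add_le hd' (γ • Ψ (M Dfun)) (γ • Ψ (M Efun))
            linarith
    -- bound each term
    have hMle : ∀ v : X → ℝ, wn d (M v) ≤ κ * wn d v := fun v => hii v
    have hDb : wn d Dfun ≤ b * δ := by
      have h1 : wn d Dfun ≤ wn d (fun y => b * (qhat y - q y)) := by
        refine wn_mono hd' fun y => ?_
        rw [hDfun]
        calc |(qhat y - q y) * L y k| = |qhat y - q y| * |L y k| := abs_mul _ _
          _ ≤ |qhat y - q y| * b := mul_le_mul_of_nonneg_left (hLb y k) (abs_nonneg _)
          _ = |b * (qhat y - q y)| := by rw [abs_mul, abs_of_nonneg hb0]; ring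
      calc wn d Dfun ≤ wn d (fun y => b * (qhat y - q y)) := h1
        _ = |b| * δ := wn_mul d b _
        _ = b * δ := by rw [abs_of_nonneg hb0]
    have hb1 : wn d (γ • Ψ (M Dfun)) ≤ γ * (κ * (b * δ)) := by
      rw [wn_smul, abs_of_nonneg hγ0]
      refine mul_le_mul_of_nonneg_left ?_ hγ0
      calc wn d (Ψ (M Dfun)) ≤ wn d (M Dfun) := hΨle _
        _ ≤ κ * wn d Dfun := hMle _
        _ ≤ κ * (b * δ) := mul_le_mul_of_nonneg_left hDb hκ
    have hb2 : wn d (γ • Ψ (M Efun)) ≤ γ * wn d Efun := by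
      rw [wn_smul, abs_of_nonneg hγ0]
      exact mul_le_mul_of_nonneg_left (hi Efun hES) hγ0
    have hb3 : wn d (γ • Ψ (M Rfun)) ≤ γ * (κ * wn d Rfun) := by
      rw [wn_smul, abs_of_nonneg hγ0]
      refine mul_le_mul_of_nonneg_left ?_ hγ0
      calc wn d (Ψ (M Rfun)) ≤ wn d (M Rfun) := hΨle _
        _ ≤ κ * wn d Rfun := hMle _
    have hEbound : wn d Efun ≤ (γ * κ * b * δ + γ * κ * wn d Rfun) / (1 - γ) := by
      rw [le_div_iff₀ h1γ]
      have hE0 := wn_nonneg d Efun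
      nlinarith [hsplit, hb1, hb2, hb3]
    -- conclude
    have htri : wn d (fun x => νhat x k - ν x k) ≤ wn d Efun + wn d Rfun := by
      have h1 : (fun x => νhat x k - ν x k) = Efun + Rfun := by
        funext x
        show νhat x k - ν x k = (νhat x k - Ψ (fun z => ν z k) x) + (Ψ (fun z => ν z k) x - ν x k)
        ring
      rw [h1]
      exact wn_add_le hd' _ _
    have hfin : (γ * κ * b * δ + γ * κ * wn d Rfun) / (1 - γ) + wn d Rfun
        = γ * κ * b * δ / (1 - γ) + ((1 - γ + γ * κ) / (1 - γ)) * wn d Rfun := by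
      field_simp
      ring
    calc wn d (fun x => νhat x k - ν x k) ≤ wn d Efun + wn d Rfun := htri
      _ ≤ (γ * κ * b * δ + γ * κ * wn d Rfun) / (1 - γ) + wn d Rfun := by linarith
      _ = γ * κ * b * δ / (1 - γ) + ((1 - γ + γ * κ) / (1 - γ)) * wn d Rfun := hfin
  -- assemble over components
  have ha0 : 0 ≤ γ * κ * b * δ / (1 - γ) :=
    div_nonneg (by positivity) h1γ.le
  have hC'0 : 0 ≤ (1 - γ + γ * κ) / (1 - γ) :=
    div_nonneg (by nlinarith) h1γ.le
  have hLHS : Real.sqrt (∑ x, d x * ∑ k, (νhat x k - ν x k) ^ 2)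
      = wn (fun _ : Fin n_p => (1 : ℝ)) (fun k => wn d (fun x => νhat x k - ν x k)) := by
    rw [wn]
    congr 1
    calc ∑ x, d x * ∑ k, (νhat x k - ν x k) ^ 2
        = ∑ x, ∑ k, d x * (νhat x k - ν x k) ^ 2 :=
          Finset.sum_congr rfl fun x _ => Finset.mul_sum _ _ _
      _ = ∑ k, ∑ x, d x * (νhat x k - ν x k) ^ 2 := Finset.sum_comm
      _ = ∑ k, (1 : ℝ) * (wn d (fun x => νhat x k - ν x k)) ^ 2 :=
          Finset.sum_congr rfl fun k _ => by rw [wn_sq hd', one_mul]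
  rw [hLHS]
  have hP0 : 0 ≤ wn (fun _ : Fin n_p => (1:ℝ)) (fun k => wn d (fun x => Ψ (fun y => ν y k) x - ν x k)) :=
    wn_nonneg _ _
  have step1 : wn (fun _ : Fin n_p => (1:ℝ)) (fun k => wn d (fun x => νhat x k - ν x k))
      ≤ wn (fun _ : Fin n_p => (1:ℝ)) (fun k => γ * κ * b * δ / (1 - γ)
          + ((1 - γ + γ * κ) / (1 - γ)) * wn d (fun x => Ψ (fun y => ν y k) x - ν x k)) := by
    refine wn_mono (fun _ => zero_le_one) fun k => ?_
    have hnk0 : 0 ≤ wn d (fun x => νhat x k - ν x k) := wn_nonneg _ _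
    have hrhs0 : 0 ≤ γ * κ * b * δ / (1 - γ)
        + ((1 - γ + γ * κ) / (1 - γ)) * wn d (fun x => Ψ (fun y => ν y k) x - ν x k) := by
      have := mul_nonneg hC'0 (wn_nonneg d (fun x => Ψ (fun y => ν y k) x - ν x k))
      linarith
    rw [abs_of_nonneg hnk0, abs_of_nonneg hrhs0]
    exact hk k
  have step2 : wn (fun _ : Fin n_p => (1:ℝ)) (fun k => γ * κ * b * δ / (1 - γ)
        + ((1 - γ + γ * κ) / (1 - γ)) * wn d (fun x => Ψ (fun y => ν y k) x - ν x k))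
      ≤ wn (fun _ : Fin n_p => (1:ℝ)) (fun _ => γ * κ * b * δ / (1 - γ))
        + ((1 - γ + γ * κ) / (1 - γ)) *
            wn (fun _ : Fin n_p => (1:ℝ)) (fun k => wn d (fun x => Ψ (fun y => ν y k) x - ν x k)) := by
    have h1 : (fun k : Fin n_p => γ * κ * b * δ / (1 - γ)
          + ((1 - γ + γ * κ) / (1 - γ)) * wn d (fun x => Ψ (fun y => ν y k) x - ν x k))
        = (fun _ : Fin n_p => γ * κ * b * δ / (1 - γ))
          + (fun k : Fin n_p => ((1 - γ + γ * κ) / (1 - γ)) * wn d (fun x => Ψ (fun y => ν y k) x - ν x k)) := rfl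
    rw [h1]
    have h2 := wn_add_le (d := fun _ : Fin n_p => (1:ℝ)) (fun _ => zero_le_one)
      (fun _ : Fin n_p => γ * κ * b * δ / (1 - γ))
      (fun k : Fin n_p => ((1 - γ + γ * κ) / (1 - γ)) * wn d (fun x => Ψ (fun y => ν y k) x - ν x k))
    have h3 : wn (fun _ : Fin n_p => (1:ℝ))
          (fun k : Fin n_p => ((1 - γ + γ * κ) / (1 - γ)) * wn d (fun x => Ψ (fun y => ν y k) x - ν x k))
        = |((1 - γ + γ * κ) / (1 - γ))| *
            wn (fun _ : Fin n_p => (1:ℝ)) (fun k => wn d (fun x => Ψ (fun y => ν y k) x - ν x k)) :=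
      wn_mul _ _ _
    rw [abs_of_nonneg hC'0] at h3
    rw [h3] at h2
    exact h2
  -- constant vector norm
  have hconst : wn (fun _ : Fin n_p => (1:ℝ)) (fun _ => γ * κ * b * δ / (1 - γ))
      = Real.sqrt n_p * (γ * κ * b * δ / (1 - γ)) := by
    rw [wn]
    have h1 : ∑ _k : Fin n_p, (1:ℝ) * (γ * κ * b * δ / (1 - γ)) ^ 2
        = (n_p : ℝ) * (γ * κ * b * δ / (1 - γ)) ^ 2 := by
      rw [Finset.sum_const, Finset.card_univ, Fintype.card_fin, nsmul_eq_mul]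
      ring
    rw [h1, Real.sqrt_mul (Nat.cast_nonneg _), Real.sqrt_sq ha0]
  have hsqrtnp : Real.sqrt (n_p : ℝ) ≤ (n_p : ℝ) := by
    rcases Nat.eq_zero_or_pos n_p with h0 | hpos
    · simp [h0]
    · have h1 : (1:ℝ) ≤ (n_p:ℝ) := by exact_mod_cast hpos
      have h2 : Real.sqrt (n_p:ℝ) ≤ Real.sqrt ((n_p:ℝ) ^ 2) := Real.sqrt_le_sqrt (by nlinarith)
      rwa [Real.sqrt_sq (by positivity)] at h2
  -- first term bound
  have hterm1 : Real.sqrt n_p * (γ * κ * b * δ / (1 - γ))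
      ≤ γ * n_p * b * κ * ((1 + γ * κ) / (1 - γ) ^ 2) * ε := by
    have h1 : Real.sqrt n_p * (γ * κ * b * δ / (1 - γ))
        ≤ (n_p : ℝ) * (γ * κ * b * δ / (1 - γ)) :=
      mul_le_mul_of_nonneg_right hsqrtnp ha0
    have h2 : (n_p : ℝ) * (γ * κ * b * δ / (1 - γ))
        ≤ (n_p : ℝ) * (γ * κ * b / (1 - γ)) * (((1 + γ * κ) / (1 - γ)) * ε) := by
      have hcoef : 0 ≤ (n_p : ℝ) * (γ * κ * b / (1 - γ)) := by positivity
      have := mul_le_mul_of_nonneg_left hδ hcoef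
      calc (n_p : ℝ) * (γ * κ * b * δ / (1 - γ))
          = (n_p : ℝ) * (γ * κ * b / (1 - γ)) * δ := by ring
        _ ≤ (n_p : ℝ) * (γ * κ * b / (1 - γ)) * (((1 + γ * κ) / (1 - γ)) * ε) := this
    have h3 : (n_p : ℝ) * (γ * κ * b / (1 - γ)) * (((1 + γ * κ) / (1 - γ)) * ε)
        = γ * n_p * b * κ * ((1 + γ * κ) / (1 - γ) ^ 2) * ε := by
      field_simp
    linarith
  -- second term bound
  have hterm2 : ((1 - γ + γ * κ) / (1 - γ)) *
        wn (fun _ : Fin n_p => (1:ℝ)) (fun k => wn d (fun x => Ψ (fun y => ν y k) x - ν x k))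
      ≤ ((1 + γ * κ) / (1 - γ)) *
          ⨅ G : Matrix (Fin n_f) (Fin n_p) ℝ,
            Real.sqrt (∑ x, d x * ∑ k, ((∑ i, G i k * φ x i) - ν x k) ^ 2) := by
    have hCle : (1 - γ + γ * κ) / (1 - γ) ≤ (1 + γ * κ) / (1 - γ) := by
      rw [div_le_div_iff₀ h1γ h1γ]
      nlinarith
    have hC0 : 0 ≤ (1 + γ * κ) / (1 - γ) := by positivity
    have hinf : wn (fun _ : Fin n_p => (1:ℝ)) (fun k => wn d (fun x => Ψ (fun y => ν y k) x - ν x k))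
        ≤ ⨅ G : Matrix (Fin n_f) (Fin n_p) ℝ,
            Real.sqrt (∑ x, d x * ∑ k, ((∑ i, G i k * φ x i) - ν x k) ^ 2) := by
      refine le_ciInf fun G => ?_
      rw [wn]
      apply Real.sqrt_le_sqrt
      have hswap : ∑ x, d x * ∑ k, ((∑ i, G i k * φ x i) - ν x k) ^ 2
          = ∑ k, ∑ x, d x * ((∑ i, φ x i * G i k) - ν x k) ^ 2 := by
        calc ∑ x, d x * ∑ k, ((∑ i, G i k * φ x i) - ν x k) ^ 2
            = ∑ x, ∑ k, d x * ((∑ i, G i k * φ x i) - ν x k) ^ 2 :=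
              Finset.sum_congr rfl fun x _ => Finset.mul_sum _ _ _
          _ = ∑ k, ∑ x, d x * ((∑ i, G i k * φ x i) - ν x k) ^ 2 := Finset.sum_comm
          _ = ∑ k, ∑ x, d x * ((∑ i, φ x i * G i k) - ν x k) ^ 2 := by
              refine Finset.sum_congr rfl fun k _ => Finset.sum_congr rfl fun x _ => ?_
              have : (∑ i, G i k * φ x i) = ∑ i, φ x i * G i k :=
                Finset.sum_congr rfl fun i _ => mul_comm _ _
              rw [this]
      rw [hswap]
      refine Finset.sum_le_sum fun k _ => ?_
      rw [one_mul, wn_sq hd']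
      exact hproj (fun y => ν y k) (fun i => G i k)
    calc ((1 - γ + γ * κ) / (1 - γ)) *
          wn (fun _ : Fin n_p => (1:ℝ)) (fun k => wn d (fun x => Ψ (fun y => ν y k) x - ν x k))
        ≤ ((1 + γ * κ) / (1 - γ)) *
            wn (fun _ : Fin n_p => (1:ℝ)) (fun k => wn d (fun x => Ψ (fun y => ν y k) x - ν x k)) :=
          mul_le_mul_of_nonneg_right hCle hP0
      _ ≤ ((1 + γ * κ) / (1 - γ)) *
            ⨅ G : Matrix (Fin n_f) (Fin n_p) ℝ,
              Real.sqrt (∑ x, d x * ∑ k, ((∑ i, G i k * φ x i) - ν x k) ^ 2) :=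
          mul_le_mul_of_nonneg_left hinf hC0
  calc wn (fun _ : Fin n_p => (1:ℝ)) (fun k => wn d (fun x => νhat x k - ν x k))
      ≤ wn (fun _ : Fin n_p => (1:ℝ)) (fun k => γ * κ * b * δ / (1 - γ)
          + ((1 - γ + γ * κ) / (1 - γ)) * wn d (fun x => Ψ (fun y => ν y k) x - ν x k)) := step1
    _ ≤ wn (fun _ : Fin n_p => (1:ℝ)) (fun _ => γ * κ * b * δ / (1 - γ))
        + ((1 - γ + γ * κ) / (1 - γ)) *
            wn (fun _ : Fin n_p => (1:ℝ)) (fun k => wn d (fun x => Ψ (fun y => ν y k) x - ν x k)) := step2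
    _ ≤ γ * n_p * b * κ * ((1 + γ * κ) / (1 - γ) ^ 2) * ε
        + ((1 + γ * κ) / (1 - γ)) *
            ⨅ G : Matrix (Fin n_f) (Fin n_p) ℝ,
              Real.sqrt (∑ x, d x * ∑ k, ((∑ i, G i k * φ x i) - ν x k) ^ 2) := by
        rw [hconst] at *
        linarith [hterm1, hterm2]
end

section
/- Let X be a nonempty finite type, d : X → ℝ weights with d(x) > 0, φ : X → ℝ^{n_f} a feature map with span S and d-orthogonal projection Ψ onto S, and M a linear operator on X → ℝ with γ ∈ [0,1), κ ≥ 0 satisfying (i) ‖Ψ(M u)‖_d ≤ ‖u‖_d for all u ∈ S and (ii) ‖M v‖_d ≤ κ·‖v‖_d for all v. Suppose F : X → ℝ^K satisfies F = C + γ·M F (componentwise) for some C : X → ℝ^K, and F̂ : X → ℝ^K has every component in S and satisfies F̂ = Ψ(C + γ·M F̂) (componentwise). Then ‖F̂ − F‖_d ≤ ((1+γ·κ)/(1−γ))·⨅_{G ∈ ℝ^{n_f×K}} ‖(x ↦ Gᵀφ(x)) − F‖_d. -/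
open Finset

noncomputable def wmap {X : Type*} [Fintype X] (d : X → ℝ) :
    (X → ℝ) →ₗ[ℝ] EuclideanSpace ℝ X where
  toFun u := WithLp.toLp 2 (fun x => Real.sqrt (d x) * u x)
  map_add' u v := by
    ext x
    show Real.sqrt (d x) * (u x + v x) = Real.sqrt (d x) * u x + Real.sqrt (d x) * v x
    ring
  map_smul' c u := by
    ext x
    show Real.sqrt (d x) * (c * u x) = c * (Real.sqrt (d x) * u x)
    ring

lemma wmap_apply {X : Type*} [Fintype X] (d : X → ℝ) (u : X → ℝ) (x : X) :
    wmap d u x = Real.sqrt (d x) * u x := rfl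

lemma wnorm {X : Type*} [Fintype X] (d : X → ℝ) (hd : ∀ x, 0 ≤ d x) (u : X → ℝ) :
    ‖wmap d u‖ = Real.sqrt (∑ x, d x * u x ^ 2) := by
  rw [EuclideanSpace.norm_eq]
  congr 1
  refine Finset.sum_congr rfl fun x _ => ?_
  rw [wmap_apply, Real.norm_eq_abs, sq_abs, mul_pow, Real.sq_sqrt (hd x)]

lemma winner {X : Type*} [Fintype X] (d : X → ℝ) (hd : ∀ x, 0 ≤ d x) (u v : X → ℝ) :
    (inner ℝ (wmap d u) (wmap d v) : ℝ) = ∑ x, d x * u x * v x := by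
  rw [PiLp.inner_apply]
  refine Finset.sum_congr rfl fun x _ => ?_
  simp only [wmap_apply, RCLike.inner_apply, conj_trivial]
  rw [show Real.sqrt (d x) * v x * (Real.sqrt (d x) * u x)
      = (Real.sqrt (d x) * Real.sqrt (d x)) * (u x * v x) by ring,
    Real.mul_self_sqrt (hd x)]
  ring

lemma norm_le_of_sq_le {a b : ℝ} (hb : 0 ≤ b) (h : a ^ 2 ≤ b ^ 2) :
    a ≤ b := by nlinarith

section main
variable {X : Type*} [Fintype X] {n_f : ℕ}
  (d : X → ℝ) (φ : X → Fin n_f → ℝ) (Ψ M : (X → ℝ) →ₗ[ℝ] (X → ℝ))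

-- v - Ψ v orthogonal to members of S, in inner-product form
lemma orth_inner (hd : ∀ x, 0 ≤ d x)
    (hΨorth : ∀ (v : X → ℝ) (h : Fin n_f → ℝ),
      ∑ x, d x * (v x - Ψ v x) * (∑ i, φ x i * h i) = 0)
    (v s : X → ℝ) (hs : ∃ h : Fin n_f → ℝ, s = fun x => ∑ i, φ x i * h i) :
    (inner ℝ (wmap d (v - Ψ v)) (wmap d s) : ℝ) = 0 := by
  obtain ⟨h, rfl⟩ := hs
  rw [winner d hd]
  simpa using hΨorth v h

-- pythagoras: ⟪a,b⟫=0 → ‖b‖ ≤ ‖a+b‖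
lemma norm_le_add_of_orth {E : Type*} [NormedAddCommGroup E] [InnerProductSpace ℝ E]
    (a b : E) (h : (inner ℝ a b : ℝ) = 0) : ‖b‖ ≤ ‖a + b‖ := by
  refine norm_le_of_sq_le (norm_nonneg _) ?_
  rw [norm_add_sq_real, h]
  nlinarith [sq_nonneg ‖a‖, norm_nonneg a]

-- Ψ is a contraction for the d-norm
lemma psi_contr (hd : ∀ x, 0 ≤ d x)
    (hΨmem : ∀ v : X → ℝ, ∃ h : Fin n_f → ℝ, Ψ v = fun x => ∑ i, φ x i * h i)
    (hΨorth : ∀ (v : X → ℝ) (h : Fin n_f → ℝ),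
      ∑ x, d x * (v x - Ψ v x) * (∑ i, φ x i * h i) = 0)
    (v : X → ℝ) : ‖wmap d (Ψ v)‖ ≤ ‖wmap d v‖ := by
  have h0 : (inner ℝ (wmap d (v - Ψ v)) (wmap d (Ψ v)) : ℝ) = 0 :=
    orth_inner d φ Ψ hd hΨorth v (Ψ v) (hΨmem v)
  have := norm_le_add_of_orth (wmap d (v - Ψ v)) (wmap d (Ψ v)) h0
  rwa [← map_add, sub_add_cancel] at this

-- minimality of the projection
lemma psi_min (hd : ∀ x, 0 ≤ d x)
    (hΨmem : ∀ v : X → ℝ, ∃ h : Fin n_f → ℝ, Ψ v = fun x => ∑ i, φ x i * h i)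
    (hΨorth : ∀ (v : X → ℝ) (h : Fin n_f → ℝ),
      ∑ x, d x * (v x - Ψ v x) * (∑ i, φ x i * h i) = 0)
    (f s : X → ℝ) (hs : ∃ h : Fin n_f → ℝ, s = fun x => ∑ i, φ x i * h i) :
    ‖wmap d (Ψ f - f)‖ ≤ ‖wmap d (s - f)‖ := by
  obtain ⟨h, hhs⟩ := hs
  obtain ⟨h', hh'⟩ := hΨmem f
  have hmem : ∃ g : Fin n_f → ℝ, s - Ψ f = fun x => ∑ i, φ x i * g i := by
    refine ⟨fun i => h i - h' i, funext fun x => ?_⟩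
    simp [hhs, hh', mul_sub, Finset.sum_sub_distrib]
  have h0 : (inner ℝ (wmap d (s - Ψ f)) (wmap d (Ψ f - f)) : ℝ) = 0 := by
    have := orth_inner d φ Ψ hd hΨorth f (s - Ψ f) hmem
    rw [real_inner_comm] at this
    rw [show Ψ f - f = -(f - Ψ f) by abel, map_neg, inner_neg_right, this, neg_zero]
  have := norm_le_add_of_orth (wmap d (s - Ψ f)) (wmap d (Ψ f - f)) h0
  rwa [← map_add, sub_add_sub_cancel] at this
end main

section main
variable {X : Type*} [Fintype X] {n_f : ℕ}
  (d : X → ℝ) (φ : X → Fin n_f → ℝ) (Ψ M : (X → ℝ) →ₗ[ℝ] (X → ℝ))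

lemma key_comp (hd : ∀ x, 0 < d x)
    (hΨmem : ∀ v : X → ℝ, ∃ h : Fin n_f → ℝ, Ψ v = fun x => ∑ i, φ x i * h i)
    (hΨorth : ∀ (v : X → ℝ) (h : Fin n_f → ℝ),
      ∑ x, d x * (v x - Ψ v x) * (∑ i, φ x i * h i) = 0)
    (γ κ : ℝ) (hγ0 : 0 ≤ γ) (hγ1 : γ < 1) (hκ : 0 ≤ κ)
    (hi : ∀ u : X → ℝ, (∃ h : Fin n_f → ℝ, u = fun x => ∑ i, φ x i * h i) →
      Real.sqrt (∑ x, d x * (Ψ (M u) x) ^ 2) ≤ Real.sqrt (∑ x, d x * (u x) ^ 2))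
    (hii : ∀ v : X → ℝ,
      Real.sqrt (∑ x, d x * (M v x) ^ 2) ≤ κ * Real.sqrt (∑ x, d x * (v x) ^ 2))
    (f fhat c : X → ℝ)
    (hf : f = c + γ • M f)
    (hmem : ∃ h : Fin n_f → ℝ, fhat = fun x => ∑ i, φ x i * h i)
    (hfh : fhat = Ψ (c + γ • M fhat)) :
    ‖wmap d (fhat - f)‖ ≤ (1 + γ * κ) / (1 - γ) * ‖wmap d (Ψ f - f)‖ := by
  have hd' : ∀ x, 0 ≤ d x := fun x => (hd x).le
  have heq : fhat - Ψ f = γ • Ψ (M (fhat - f)) := by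
    have hdiff : (c + γ • M fhat) - (c + γ • M f) = γ • M (fhat - f) := by
      rw [map_sub, smul_sub]; abel_nf
    conv_lhs => rw [hfh]
    conv_lhs => rw [hf]
    rw [← map_sub, hdiff, map_smul]
  have hmem2 : ∃ h : Fin n_f → ℝ, fhat - Ψ f = fun x => ∑ i, φ x i * h i := by
    obtain ⟨h₁, hh₁⟩ := hmem
    obtain ⟨h₂, hh₂⟩ := hΨmem f
    exact ⟨fun i => h₁ i - h₂ i, funext fun x => by
      simp [hh₁, hh₂, mul_sub, Finset.sum_sub_distrib]⟩
  have hi' : ‖wmap d (Ψ (M (fhat - Ψ f)))‖ ≤ ‖wmap d (fhat - Ψ f)‖ := by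
    have := hi (fhat - Ψ f) hmem2
    rwa [← wnorm d hd', ← wnorm d hd'] at this
  have hii' : ‖wmap d (Ψ (M (Ψ f - f)))‖ ≤ κ * ‖wmap d (Ψ f - f)‖ := by
    refine (psi_contr d φ Ψ hd' hΨmem hΨorth _).trans ?_
    have := hii (Ψ f - f)
    rwa [← wnorm d hd', ← wnorm d hd'] at this
  have hA : ‖wmap d (fhat - Ψ f)‖
      ≤ γ * (‖wmap d (fhat - Ψ f)‖ + κ * ‖wmap d (Ψ f - f)‖) := by
    calc ‖wmap d (fhat - Ψ f)‖ = ‖wmap d (γ • Ψ (M (fhat - f)))‖ := by rw [← heq]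
      _ = γ * ‖wmap d (Ψ (M (fhat - f)))‖ := by
          rw [map_smul, norm_smul, Real.norm_of_nonneg hγ0]
      _ ≤ γ * (‖wmap d (fhat - Ψ f)‖ + κ * ‖wmap d (Ψ f - f)‖) := by
          refine mul_le_mul_of_nonneg_left ?_ hγ0
          have hsplit : M (fhat - f) = M (fhat - Ψ f) + M (Ψ f - f) := by
            rw [← map_add]; congr 1; abel
          calc ‖wmap d (Ψ (M (fhat - f)))‖
              = ‖wmap d (Ψ (M (fhat - Ψ f))) + wmap d (Ψ (M (Ψ f - f)))‖ := by
                rw [hsplit, map_add, map_add]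
            _ ≤ ‖wmap d (Ψ (M (fhat - Ψ f)))‖ + ‖wmap d (Ψ (M (Ψ f - f)))‖ :=
                norm_add_le _ _
            _ ≤ _ := add_le_add hi' hii'
  have htri : ‖wmap d (fhat - f)‖
      ≤ ‖wmap d (fhat - Ψ f)‖ + ‖wmap d (Ψ f - f)‖ := by
    calc ‖wmap d (fhat - f)‖
        = ‖wmap d (fhat - Ψ f) + wmap d (Ψ f - f)‖ := by
          rw [← map_add]; congr 1; abel
      _ ≤ _ := norm_add_le _ _
  have hAnn : (0:ℝ) ≤ ‖wmap d (fhat - Ψ f)‖ := norm_nonneg _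
  have hBnn : (0:ℝ) ≤ ‖wmap d (Ψ f - f)‖ := norm_nonneg _
  rw [div_mul_eq_mul_div, le_div_iff₀ (by linarith)]
  nlinarith
end main
/-- Generalized least-squares temporal-difference error bound (vector-valued
Bellman equations, Eq. (kolter-vectorial) in the paper). -/
theorem stmt_1 {X : Type*} [Fintype X] [Nonempty X] {n_f K : ℕ}
    (d : X → ℝ) (hd : ∀ x, 0 < d x)
    (φ : X → Fin n_f → ℝ)
    (Ψ M : (X → ℝ) →ₗ[ℝ] (X → ℝ))
    -- Ψ maps into the span S of the features
    (hΨmem : ∀ v : X → ℝ, ∃ h : Fin n_f → ℝ, Ψ v = fun x => ∑ i, φ x i * h i)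
    -- v - Ψ v is d-orthogonal to S : Ψ is the d-orthogonal projection onto S
    (hΨorth : ∀ (v : X → ℝ) (h : Fin n_f → ℝ),
      ∑ x, d x * (v x - Ψ v x) * (∑ i, φ x i * h i) = 0)
    (γ κ : ℝ) (hγ0 : 0 ≤ γ) (hγ1 : γ < 1) (hκ : 0 ≤ κ)
    -- (i) ‖Ψ (M u)‖_d ≤ ‖u‖_d for all u ∈ S
    (hi : ∀ u : X → ℝ, (∃ h : Fin n_f → ℝ, u = fun x => ∑ i, φ x i * h i) →
      Real.sqrt (∑ x, d x * (Ψ (M u) x) ^ 2) ≤ Real.sqrt (∑ x, d x * (u x) ^ 2))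
    -- (ii) ‖M v‖_d ≤ κ·‖v‖_d for all v
    (hii : ∀ v : X → ℝ,
      Real.sqrt (∑ x, d x * (M v x) ^ 2) ≤ κ * Real.sqrt (∑ x, d x * (v x) ^ 2))
    (F Fhat C : X → Fin K → ℝ)
    -- F = C + γ·M F componentwise
    (hF : ∀ k : Fin K, (fun x => F x k) = (fun x => C x k) + γ • M (fun x => F x k))
    -- every component of F̂ lies in S
    (hFhatmem : ∀ k : Fin K, ∃ h : Fin n_f → ℝ,
      (fun x => Fhat x k) = fun x => ∑ i, φ x i * h i)
    -- F̂ = Ψ (C + γ·M F̂) componentwise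
    (hFhat : ∀ k : Fin K, (fun x => Fhat x k)
      = Ψ ((fun x => C x k) + γ • M (fun x => Fhat x k))) :
    Real.sqrt (∑ x, d x * ∑ k, (Fhat x k - F x k) ^ 2)
      ≤ ((1 + γ * κ) / (1 - γ)) *
          ⨅ G : Matrix (Fin n_f) (Fin K) ℝ,
            Real.sqrt (∑ x, d x * ∑ k, ((∑ i, G i k * φ x i) - F x k) ^ 2) := by
  have hd' : ∀ x, 0 ≤ d x := fun x => (hd x).le
  set c : ℝ := (1 + γ * κ) / (1 - γ) with hcdef
  have hc : 0 ≤ c := div_nonneg (by nlinarith) (by linarith)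
  set a : Fin K → ℝ :=
    fun k => ‖wmap d ((fun x => Fhat x k) - fun x => F x k)‖ with hadef
  set b : Fin K → ℝ :=
    fun k => ‖wmap d (Ψ (fun x => F x k) - fun x => F x k)‖ with hbdef
  -- rewrite a weighted double-sum as a sum of squared norms
  have hswap : ∀ (G H : X → Fin K → ℝ),
      ∑ x, d x * ∑ k, (G x k - H x k) ^ 2
        = ∑ k, ‖wmap d ((fun x => G x k) - fun x => H x k)‖ ^ 2 := by
    intro G H
    have h1 : ∀ k, ‖wmap d ((fun x => G x k) - fun x => H x k)‖ ^ 2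
        = ∑ x, d x * (G x k - H x k) ^ 2 := by
      intro k
      rw [wnorm d hd', Real.sq_sqrt]
      · rfl
      · exact Finset.sum_nonneg fun x _ => mul_nonneg (hd' x) (sq_nonneg _)
    simp_rw [h1, Finset.mul_sum]
    exact Finset.sum_comm
  have hk : ∀ k, a k ≤ c * b k := fun k =>
    key_comp d φ Ψ M hd hΨmem hΨorth γ κ hγ0 hγ1 hκ hi hii
      (fun x => F x k) (fun x => Fhat x k) (fun x => C x k)
      (hF k) (hFhatmem k) (hFhat k)
  have hsum : ∑ k, a k ^ 2 ≤ c ^ 2 * ∑ k, b k ^ 2 := by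
    rw [Finset.mul_sum]
    refine Finset.sum_le_sum fun k _ => ?_
    have h1 := hk k
    have h2 : (0:ℝ) ≤ a k := norm_nonneg _
    have h3 : (0:ℝ) ≤ b k := norm_nonneg _
    nlinarith
  have hL : Real.sqrt (∑ x, d x * ∑ k, (Fhat x k - F x k) ^ 2)
      ≤ c * Real.sqrt (∑ k, b k ^ 2) := by
    rw [hswap Fhat F]
    calc Real.sqrt (∑ k, a k ^ 2) ≤ Real.sqrt (c ^ 2 * ∑ k, b k ^ 2) :=
          Real.sqrt_le_sqrt hsum
      _ = c * Real.sqrt (∑ k, b k ^ 2) := by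
          rw [Real.sqrt_mul (sq_nonneg c), Real.sqrt_sq hc]
  have hG : ∀ G : Matrix (Fin n_f) (Fin K) ℝ,
      Real.sqrt (∑ k, b k ^ 2)
        ≤ Real.sqrt (∑ x, d x * ∑ k, ((∑ i, G i k * φ x i) - F x k) ^ 2) := by
    intro G
    have hrw : ∑ x, d x * ∑ k, ((∑ i, G i k * φ x i) - F x k) ^ 2
        = ∑ k, ‖wmap d ((fun x => ∑ i, G i k * φ x i) - fun x => F x k)‖ ^ 2 :=
      hswap (fun x k => ∑ i, G i k * φ x i) F
    rw [hrw]
    refine Real.sqrt_le_sqrt (Finset.sum_le_sum fun k _ => ?_)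
    have hmem : ∃ h : Fin n_f → ℝ,
        (fun x => ∑ i, G i k * φ x i) = fun x => ∑ i, φ x i * h i :=
      ⟨fun i => G i k, funext fun x => Finset.sum_congr rfl fun i _ => mul_comm _ _⟩
    have := psi_min d φ Ψ hd' hΨmem hΨorth (fun x => F x k)
      (fun x => ∑ i, G i k * φ x i) hmem
    exact pow_le_pow_left₀ (norm_nonneg _) this 2
  calc Real.sqrt (∑ x, d x * ∑ k, (Fhat x k - F x k) ^ 2)
      ≤ c * Real.sqrt (∑ k, b k ^ 2) := hL
    _ ≤ c * ⨅ G : Matrix (Fin n_f) (Fin K) ℝ,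
          Real.sqrt (∑ x, d x * ∑ k, ((∑ i, G i k * φ x i) - F x k) ^ 2) :=
        mul_le_mul_of_nonneg_left (le_ciInf hG) hc
end

section
/- Let X be a nonempty finite type, g : X → X → ℝ a row-stochastic kernel, γ ∈ [0,1), r : X → ℝ, and Q : X → ℝ a function satisfying the Bellman equation Q(x) = r(x) + γ·∑_{x'} g(x'|x)·Q(x') for all x. Let φ : X → ℝ^{n_f} and define ξ(x) = φ(x) − γ·∑_{x'} g(x'|x)·φ(x'). Assume there exists ω* ∈ ℝ^{n_f} with ⟪ξ(x), ω*⟫ = r(x) for all x (perfect features). Let ζ : X → ℝ and assume the matrix A = ∑_{x} ζ(x)·φ(x)·ξ(x)ᵀ ∈ ℝ^{n_f×n_f} is invertible, and set ω_TD = A⁻¹·(∑_{x} ζ(x)·r(x)·φ(x)). Then ⟪φ(x), ω_TD⟫ = Q(x) for every x ∈ X. -/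
open Finset

/-- With perfect features, the LSTD solution recovers the exact Q-function. -/
theorem stmt_2 {X : Type*} [Fintype X] [Nonempty X] {n_f : ℕ}
    (g : X → X → ℝ)  -- g x x' = g(x' | x)
    (hg0 : ∀ x x', 0 ≤ g x x') (hg1 : ∀ x, ∑ x', g x x' = 1)
    (γ : ℝ) (hγ0 : 0 ≤ γ) (hγ1 : γ < 1)
    (r Q : X → ℝ)
    (hQ : ∀ x, Q x = r x + γ * ∑ x', g x x' * Q x')
    (φ ξ : X → Fin n_f → ℝ)
    (hξ : ∀ x i, ξ x i = φ x i - γ * ∑ x', g x x' * φ x' i)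
    (ωstar : Fin n_f → ℝ)
    (hωstar : ∀ x, ∑ i, ξ x i * ωstar i = r x)
    (ζ : X → ℝ)
    (A : Matrix (Fin n_f) (Fin n_f) ℝ)
    (hA : A = ∑ x, ζ x • Matrix.vecMulVec (φ x) (ξ x))
    (hAinv : IsUnit A)
    (ωTD : Fin n_f → ℝ)
    (hωTD : ωTD = A⁻¹.mulVec (∑ x, (ζ x * r x) • φ x)) :
    ∀ x, ∑ i, φ x i * ωTD i = Q x := by
  -- Step 1: A.mulVec ωstar = b
  have hb : A.mulVec ωstar = ∑ x, (ζ x * r x) • φ x := by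
    funext i
    simp only [Matrix.mulVec, dotProduct, hA, Matrix.sum_apply,
      Matrix.smul_apply, Matrix.vecMulVec_apply, smul_eq_mul,
      Finset.sum_apply, Pi.smul_apply]
    simp_rw [Finset.sum_mul]
    rw [Finset.sum_comm]
    apply Finset.sum_congr rfl
    intro x _
    rw [← hωstar x, Finset.mul_sum, Finset.sum_mul]
    apply Finset.sum_congr rfl
    intro j _
    ring
  -- Step 2: ωTD = ωstar
  have hdet : IsUnit A.det := (Matrix.isUnit_iff_isUnit_det A).mp hAinv
  have hTD : ωTD = ωstar := by
    rw [hωTD, ← hb, Matrix.mulVec_mulVec, Matrix.nonsing_inv_mul A hdet,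
      Matrix.one_mulVec]
  -- Step 3: f x := ⟪φ x, ωstar⟫ satisfies the Bellman equation
  set f : X → ℝ := fun x => ∑ i, φ x i * ωstar i with hf
  have hfeq : ∀ x, f x = r x + γ * ∑ x', g x x' * f x' := by
    intro x
    have h1 : ∑ i, ξ x i * ωstar i
        = f x - γ * ∑ x', g x x' * f x' := by
      simp only [hξ, sub_mul, Finset.sum_sub_distrib, hf]
      congr 1
      simp_rw [mul_assoc, Finset.sum_mul, Finset.mul_sum]
      rw [Finset.sum_comm]
      apply Finset.sum_congr rfl
      intro x' _
      apply Finset.sum_congr rfl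
      intro j _
      ring
    have := hωstar x
    rw [h1] at this
    linarith
  -- Step 4: uniqueness of the fixed point
  have hzero : ∀ x, f x = Q x := by
    set h : X → ℝ := fun x => f x - Q x with hh
    have hbell : ∀ x, h x = γ * ∑ x', g x x' * h x' := by
      intro x
      have := hfeq x
      have := hQ x
      simp only [hh, mul_sub, Finset.sum_sub_distrib, mul_sub]
      linarith [hfeq x, hQ x]
    obtain ⟨x0, hx0⟩ := Finset.exists_max_image Finset.univ (fun x => |h x|)
      ⟨Classical.arbitrary X, Finset.mem_univ _⟩
    have hmax : ∀ x, |h x| ≤ |h x0| := fun x => hx0.2 x (Finset.mem_univ x)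
    have key : |h x0| ≤ γ * |h x0| := by
      calc |h x0| = γ * |∑ x', g x0 x' * h x'| := by
            rw [hbell x0, abs_mul, abs_of_nonneg hγ0]
        _ ≤ γ * ∑ x', g x0 x' * |h x0| := by
            apply mul_le_mul_of_nonneg_left _ hγ0
            calc |∑ x', g x0 x' * h x'| ≤ ∑ x', |g x0 x' * h x'| :=
                  Finset.abs_sum_le_sum_abs _ _
              _ ≤ ∑ x', g x0 x' * |h x0| := by
                  apply Finset.sum_le_sum
                  intro x' _
                  rw [abs_mul, abs_of_nonneg (hg0 x0 x')]
                  exact mul_le_mul_of_nonneg_left (hmax x') (hg0 x0 x')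
        _ = γ * |h x0| := by rw [← Finset.sum_mul, hg1 x0, one_mul]
    have h0 : |h x0| = 0 := by nlinarith [abs_nonneg (h x0)]
    intro x
    have := hmax x
    rw [h0] at this
    have : |h x| = 0 := le_antisymm this (abs_nonneg _)
    have := abs_eq_zero.mp this
    simpa [hh, sub_eq_zero] using this
  intro x
  rw [hTD, ← hzero x]
end

section
/- Let X be a nonempty finite type, U ⊆ ℝ^p open, and for each θ ∈ U let g_θ : X → X → ℝ be a row-stochastic kernel such that each entry θ ↦ g_θ(x'|x) is differentiable on U. Let γ ∈ [0,1), r : X → ℝ, and let Q_θ : X → ℝ be the unique solution of Q_θ(x) = r(x) + γ·∑_{x'} g_θ(x'|x)·Q_θ(x'). Let φ : X → ℝ^{n_f} (independent of θ) and ξ_θ(x) = φ(x) − γ·∑_{x'} g_θ(x'|x)·φ(x'). Assume that for every θ ∈ U there exists ω*(θ) ∈ ℝ^{n_f} with ⟪ξ_θ(x), ω*(θ)⟫ = r(x) for all x, and let ζ : X → ℝ be such that A(θ) = ∑_{x} ζ(x)·φ(x)·ξ_θ(x)ᵀ is invertible for all θ ∈ U; set ω_TD(θ) = A(θ)⁻¹·(∑_{x}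 ζ(x)·r(x)·φ(x)). Then θ ↦ ω_TD(θ) is differentiable on U, for each x the map θ ↦ Q_θ(x) is differentiable on U, and for all θ ∈ U, x ∈ X and k ∈ {1,…,p}: ∂Q_θ(x)/∂θ_k = ⟪φ(x), ∂ω_TD(θ)/∂θ_k⟫; i.e., the TD gradient critic Γ_TD(x) = φ(x)ᵀ·∇_θ ω_TD(θ) equals ∇_θ Q_θ(x). -/
open Finset

private lemma prod_diffOn {q : ℕ} {ι : Type*} [DecidableEq ι] (s : Finset ι)
    {U : Set (Fin q → ℝ)} (f : ι → (Fin q → ℝ) → ℝ)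
    (h : ∀ i ∈ s, DifferentiableOn ℝ (f i) U) :
    DifferentiableOn ℝ (fun θ => ∏ i ∈ s, f i θ) U := by
  induction s using Finset.induction with
  | empty => simp only [Finset.prod_empty]; exact differentiableOn_const 1
  | @insert a s hni ih =>
    simp only [Finset.prod_insert hni]
    exact (h a (Finset.mem_insert_self a s)).mul
      (ih fun i hi => h i (Finset.mem_insert_of_mem hi))

private lemma det_diffOn {q n : ℕ} {U : Set (Fin q → ℝ)}
    (M : (Fin q → ℝ) → Matrix (Fin n) (Fin n) ℝ)
    (h : ∀ i j, DifferentiableOn ℝ (fun θ => M θ i j) U) :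
    DifferentiableOn ℝ (fun θ => (M θ).det) U := by
  have : (fun θ => (M θ).det)
      = fun θ => ∑ σ : Equiv.Perm (Fin n),
          ((Equiv.Perm.sign σ : ℤ) : ℝ) * ∏ i, M θ (σ i) i := by
    funext θ; rw [Matrix.det_apply']
  rw [this]
  refine DifferentiableOn.fun_sum fun σ _ => DifferentiableOn.const_mul ?_ _
  exact prod_diffOn Finset.univ _ fun i _ => h (σ i) i

/-- With perfect features, the TD gradient critic Γ_TD(x) = φ(x)ᵀ·∇_θ ω_TD(θ)
equals the true gradient ∇_θ Q_θ(x). -/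
theorem stmt_3 {X : Type*} [Fintype X] [Nonempty X] {n_f p : ℕ}
    (U : Set (Fin p → ℝ)) (hU : IsOpen U)
    (g : (Fin p → ℝ) → X → X → ℝ)  -- g θ x x' = g_θ(x' | x)
    (hg0 : ∀ θ ∈ U, ∀ x x', 0 ≤ g θ x x')
    (hg1 : ∀ θ ∈ U, ∀ x, ∑ x', g θ x x' = 1)
    (hgdiff : ∀ x x', DifferentiableOn ℝ (fun θ => g θ x x') U)
    (γ : ℝ) (hγ0 : 0 ≤ γ) (hγ1 : γ < 1)
    (r : X → ℝ)
    (Q : (Fin p → ℝ) → X → ℝ)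
    (hQ : ∀ θ ∈ U, ∀ x, Q θ x = r x + γ * ∑ x', g θ x x' * Q θ x')
    (φ : X → Fin n_f → ℝ)
    (ξ : (Fin p → ℝ) → X → Fin n_f → ℝ)
    (hξ : ∀ θ x i, ξ θ x i = φ x i - γ * ∑ x', g θ x x' * φ x' i)
    (hperfect : ∀ θ ∈ U, ∃ ω : Fin n_f → ℝ, ∀ x, ∑ i, ξ θ x i * ω i = r x)
    (ζ : X → ℝ)
    (A : (Fin p → ℝ) → Matrix (Fin n_f) (Fin n_f) ℝ)
    (hA : ∀ θ, A θ = ∑ x, ζ x • Matrix.vecMulVec (φ x) (ξ θ x))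
    (hAinv : ∀ θ ∈ U, IsUnit (A θ))
    (ωTD : (Fin p → ℝ) → Fin n_f → ℝ)
    (hωTD : ∀ θ, ωTD θ = (A θ)⁻¹.mulVec (∑ x, (ζ x * r x) • φ x)) :
    DifferentiableOn ℝ ωTD U ∧
    (∀ x, DifferentiableOn ℝ (fun θ => Q θ x) U) ∧
    (∀ θ ∈ U, ∀ (x : X) (k : Fin p),
      fderiv ℝ (fun θ' => Q θ' x) θ (Pi.single k 1)
        = ∑ i, φ x i * fderiv ℝ ωTD θ (Pi.single k 1) i) := by
  classical
  -- differentiability of ξ entries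
  have hξdiff : ∀ x i, DifferentiableOn ℝ (fun θ => ξ θ x i) U := by
    intro x i
    have h1 : (fun θ => ξ θ x i)
        = fun θ => φ x i - γ * ∑ x', g θ x x' * φ x' i := funext fun θ => hξ θ x i
    rw [h1]
    exact (differentiableOn_const _).sub
      (DifferentiableOn.const_mul
        (DifferentiableOn.fun_sum fun x' _ => (hgdiff x x').mul_const _) _)
  -- differentiability of A entries
  have hAdiff : ∀ i j, DifferentiableOn ℝ (fun θ => A θ i j) U := by
    intro i j
    have h1 : (fun θ => A θ i j) = fun θ => ∑ x, (ζ x * φ x i) * ξ θ x j := by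
      funext θ
      rw [hA]
      simp [Matrix.sum_apply, Matrix.vecMulVec_apply, mul_assoc]
    rw [h1]
    exact DifferentiableOn.fun_sum fun x _ => (hξdiff x j).const_mul _
  -- differentiability of det and adjugate
  have hdet : DifferentiableOn ℝ (fun θ => (A θ).det) U := det_diffOn A hAdiff
  have hdetne : ∀ θ ∈ U, (A θ).det ≠ 0 := fun θ hθ =>
    (Matrix.isUnit_iff_isUnit_det _).mp (hAinv θ hθ) |>.ne_zero
  have hadj : ∀ i j, DifferentiableOn ℝ (fun θ => (A θ).adjugate i j) U := by
    intro i j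
    have h1 : (fun θ => (A θ).adjugate i j)
        = fun θ => ((A θ).updateRow j (Pi.single i 1)).det := by
      funext θ; rw [Matrix.adjugate_apply]
    rw [h1]
    refine det_diffOn _ fun k l => ?_
    by_cases hk : k = j
    · subst hk
      simp only [Matrix.updateRow_self]
      exact differentiableOn_const _
    · simp only [Matrix.updateRow_apply, if_neg hk]
      exact hAdiff k l
  -- differentiability of ωTD components
  have hωdiff : ∀ i, DifferentiableOn ℝ (fun θ => ωTD θ i) U := by
    intro i
    have h1 : ∀ θ, ωTD θ i
        = ∑ j, (((A θ).det)⁻¹ * (A θ).adjugate i j) * (∑ x, (ζ x * r x) • φ x) j := by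
      intro θ
      rw [hωTD, Matrix.inv_def, Matrix.mulVec, dotProduct]
      simp [Ring.inverse_eq_inv']
    have h2 : (fun θ => ωTD θ i)
        = fun θ => ∑ j, (((A θ).det)⁻¹ * (A θ).adjugate i j)
            * (∑ x, (ζ x * r x) • φ x) j := funext h1
    rw [h2]
    refine DifferentiableOn.fun_sum fun j _ => DifferentiableOn.mul_const ?_ _
    exact (hdet.inv hdetne).mul (hadj i j)
  have hωdiffOn : DifferentiableOn ℝ ωTD U := differentiableOn_pi.mpr hωdiff
  -- key: Q θ x = ⟪φ x, ωTD θ⟫ on U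
  have key : ∀ θ ∈ U, ∀ x, Q θ x = ∑ i, φ x i * ωTD θ i := by
    intro θ hθ
    obtain ⟨ω, hω⟩ := hperfect θ hθ
    -- A θ *ᵥ ω = b
    have hAω : (A θ).mulVec ω = ∑ x, (ζ x * r x) • φ x := by
      funext i
      rw [Matrix.mulVec, dotProduct]
      have h1 : ∀ j, A θ i j = ∑ x, ζ x * (φ x i * ξ θ x j) := by
        intro j; rw [hA]; simp [Matrix.sum_apply, Matrix.vecMulVec_apply]
      simp only [h1, Finset.sum_mul]
      rw [Finset.sum_comm]
      have h2 : ∀ x : X, ∑ j, ζ x * (φ x i * ξ θ x j) * ω j = ζ x * r x * φ x i := by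
        intro x
        have hh : ∑ j, ζ x * (φ x i * ξ θ x j) * ω j
            = (ζ x * φ x i) * ∑ j, ξ θ x j * ω j := by
          rw [Finset.mul_sum]; congr 1; funext j; ring
        rw [hh, hω x]; ring
      simp only [h2]
      simp [Finset.sum_apply, Pi.smul_apply, smul_eq_mul]
    have hωeq : ωTD θ = ω := by
      rw [hωTD, ← hAω, Matrix.mulVec_mulVec,
        Matrix.nonsing_inv_mul _ ((Matrix.isUnit_iff_isUnit_det _).mp (hAinv θ hθ)),
        Matrix.one_mulVec]
    rw [hωeq]
    -- ⟪φ x, ω⟫ satisfies the Bellman equation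
    have hlin : ∀ x, (∑ i, φ x i * ω i)
        = r x + γ * ∑ x', g θ x x' * ∑ i, φ x' i * ω i := by
      intro x
      have h3 : r x = ∑ i, φ x i * ω i
          - γ * ∑ x', g θ x x' * ∑ i, φ x' i * ω i := by
        rw [← hω x]
        simp only [hξ, sub_mul, Finset.sum_sub_distrib]
        congr 1
        simp only [Finset.mul_sum, Finset.sum_mul, mul_assoc]
        rw [Finset.sum_comm]
      rw [h3]; ring
    -- uniqueness of the Bellman solution
    set d : X → ℝ := fun x => Q θ x - ∑ i, φ x i * ω i with hdd
    have hd : ∀ x, d x = γ * ∑ x', g θ x x' * d x' := by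
      intro x
      have : ∑ x', g θ x x' * d x'
          = (∑ x', g θ x x' * Q θ x') - ∑ x', g θ x x' * ∑ i, φ x' i * ω i := by
        rw [← Finset.sum_sub_distrib]; congr 1; funext x'; simp [hdd]; ring
      rw [this, hdd]
      simp only []
      rw [hQ θ hθ x, hlin x]
      ring
    obtain ⟨x₀, -, hx₀⟩ := Finset.univ.exists_max_image (fun x => |d x|) univ_nonempty
    have hb : |d x₀| ≤ γ * |d x₀| := by
      calc |d x₀| = γ * |∑ x', g θ x₀ x' * d x'| := by
            rw [hd x₀, abs_mul, abs_of_nonneg hγ0]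
        _ ≤ γ * ∑ x', g θ x₀ x' * |d x₀| := by
            refine mul_le_mul_of_nonneg_left ?_ hγ0
            refine le_trans (Finset.abs_sum_le_sum_abs _ _) (Finset.sum_le_sum fun x' _ => ?_)
            rw [abs_mul, abs_of_nonneg (hg0 θ hθ x₀ x')]
            exact mul_le_mul_of_nonneg_left (hx₀ x' (mem_univ _)) (hg0 θ hθ x₀ x')
        _ = γ * |d x₀| := by rw [← Finset.sum_mul, hg1 θ hθ x₀, one_mul]
    have hx₀0 : |d x₀| = 0 := by nlinarith [abs_nonneg (d x₀)]
    intro x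
    have : |d x| = 0 := le_antisymm (hx₀0 ▸ hx₀ x (mem_univ _)) (abs_nonneg _)
    have : d x = 0 := abs_eq_zero.mp this
    have := sub_eq_zero.mp this
    exact this
  -- Q differentiability
  have hQdiff : ∀ x, DifferentiableOn ℝ (fun θ => Q θ x) U := by
    intro x
    refine DifferentiableOn.congr ?_ (fun θ hθ => key θ hθ x)
    exact DifferentiableOn.fun_sum fun i _ => (hωdiff i).const_mul _
  refine ⟨hωdiffOn, hQdiff, ?_⟩
  intro θ hθ x k
  have hωAt : ∀ i, DifferentiableAt ℝ (fun θ' => ωTD θ' i) θ :=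
    fun i => ((hωdiff i) θ hθ).differentiableAt (hU.mem_nhds hθ)
  have hev : (fun θ' => Q θ' x) =ᶠ[nhds θ] fun θ' => ∑ i, φ x i * ωTD θ' i :=
    Filter.eventuallyEq_of_mem (hU.mem_nhds hθ) (fun θ' hθ' => key θ' hθ' x)
  rw [hev.fderiv_eq]
  have hsum : fderiv ℝ (fun θ' => ∑ i, φ x i * ωTD θ' i) θ
      = ∑ i, φ x i • fderiv ℝ (fun θ' => ωTD θ' i) θ := by
    rw [fderiv_fun_sum fun i _ => (hωAt i).const_mul _]
    congr 1; funext i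
    exact fderiv_const_mul (hωAt i) _
  rw [hsum]
  rw [fderiv_pi hωAt]
  simp [ContinuousLinearMap.sum_apply]
end

section
/- Let X be a finite type, d : X → ℝ with d(x) ≥ 0, g : X → X → ℝ a row-stochastic kernel, γ ∈ [0,1), φ : X → ℝ^{n_f}, and c : X → ℝ^K. Assume the Gram matrix ∑_{x} d(x)·φ(x)·φ(x)ᵀ is invertible, so that for each H ∈ ℝ^{n_f×K} the projected update T(H) = argmin_{H'} ∑_{x} d(x)·‖H'ᵀφ(x) − c(x) − γ·∑_{x'} g(x'|x)·Hᵀφ(x')‖² is well defined. Then H ∈ ℝ^{n_f×K} is a fixed point of T if and only if A·H = B, where A = ∑_{x} d(x)·φ(x)·(φ(x) − γ·∑_{x'} g(x'|x)·φ(x'))ᵀ and B = ∑_{x} d(x)·φ(x)·c(x)ᵀ. In particular, if A is invertible, then H* = A⁻¹·B is the unique fixed point of T. -/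
open Finset

lemma expand_lsq {X : Type*} [Fintype X] {n K : ℕ} (d : X → ℝ)
    (φ : X → Fin n → ℝ) (t : X → Fin K → ℝ)
    (H D : Matrix (Fin n) (Fin K) ℝ) :
    ∑ x, d x * ∑ k, ((∑ i, (H i k + D i k) * φ x i) - t x k) ^ 2
      = (∑ x, d x * ∑ k, ((∑ i, H i k * φ x i) - t x k) ^ 2)
        + 2 * ∑ j, ∑ k, D j k * ∑ x, d x * (φ x j * ((∑ i, H i k * φ x i) - t x k))
        + ∑ x, d x * ∑ k, (∑ i, D i k * φ x i) ^ 2 := by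
  have key : ∀ x, d x * ∑ k, ((∑ i, (H i k + D i k) * φ x i) - t x k) ^ 2
      = d x * ∑ k, ((∑ i, H i k * φ x i) - t x k) ^ 2
        + (∑ k, ∑ j, 2 * (D j k * (d x * (φ x j * ((∑ i, H i k * φ x i) - t x k)))))
        + d x * ∑ k, (∑ i, D i k * φ x i) ^ 2 := by
    intro x
    have hsq : ∀ k, ((∑ i, (H i k + D i k) * φ x i) - t x k) ^ 2
        = ((∑ i, H i k * φ x i) - t x k) ^ 2
          + 2 * ((∑ i, D i k * φ x i) * ((∑ i, H i k * φ x i) - t x k))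
          + (∑ i, D i k * φ x i) ^ 2 := by
      intro k
      have h1 : (∑ i, (H i k + D i k) * φ x i)
          = (∑ i, H i k * φ x i) + (∑ i, D i k * φ x i) := by
        rw [← Finset.sum_add_distrib]; exact Finset.sum_congr rfl (fun i _ => by ring)
      rw [h1]; ring
    simp only [hsq]
    rw [Finset.sum_add_distrib, Finset.sum_add_distrib, mul_add, mul_add]
    congr 1
    congr 1
    rw [Finset.mul_sum]
    apply Finset.sum_congr rfl
    intro k _
    have h2 : ∀ j, 2 * (D j k * (d x * (φ x j * ((∑ i, H i k * φ x i) - t x k))))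
        = (D j k * φ x j) * (2 * (d x * ((∑ i, H i k * φ x i) - t x k))) := by
      intro j; ring
    simp only [h2]
    rw [← Finset.sum_mul]
    ring
  simp only [key]
  rw [Finset.sum_add_distrib, Finset.sum_add_distrib]
  congr 2
  have h3 : (∑ j, ∑ k, D j k * ∑ x, d x * (φ x j * ((∑ i, H i k * φ x i) - t x k)))
      = ∑ j, ∑ k, ∑ x, D j k * (d x * (φ x j * ((∑ i, H i k * φ x i) - t x k))) := by
    simp only [Finset.mul_sum]
  rw [h3]
  have perm : ∀ (F : X → Fin K → Fin n → ℝ),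
      ∑ x, ∑ k, ∑ j, F x k j = ∑ j, ∑ k, ∑ x, F x k j := by
    intro F
    calc ∑ x, ∑ k, ∑ j, F x k j = ∑ k, ∑ x, ∑ j, F x k j := Finset.sum_comm
      _ = ∑ k, ∑ j, ∑ x, F x k j := Finset.sum_congr rfl fun _ _ => Finset.sum_comm
      _ = ∑ j, ∑ k, ∑ x, F x k j := Finset.sum_comm
  rw [perm]
  simp only [Finset.mul_sum]

lemma lsq_iff {X : Type*} [Fintype X] {n K : ℕ} (d : X → ℝ) (hd : ∀ x, 0 ≤ d x)
    (φ : X → Fin n → ℝ) (t : X → Fin K → ℝ)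
    (H : Matrix (Fin n) (Fin K) ℝ) :
    (∀ H' : Matrix (Fin n) (Fin K) ℝ,
      ∑ x, d x * ∑ k, ((∑ i, H i k * φ x i) - t x k) ^ 2
        ≤ ∑ x, d x * ∑ k, ((∑ i, H' i k * φ x i) - t x k) ^ 2)
      ↔ ∀ j k, ∑ x, d x * (φ x j * ((∑ i, H i k * φ x i) - t x k)) = 0 := by
  constructor
  · intro hmin j k
    by_contra hG
    set G : ℝ := ∑ x, d x * (φ x j * ((∑ i, H i k * φ x i) - t x k)) with hGdef
    set Q : ℝ := ∑ x, d x * (φ x j) ^ 2 with hQdef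
    have hQ0 : 0 ≤ Q := Finset.sum_nonneg fun x _ => mul_nonneg (hd x) (sq_nonneg _)
    have hQpos : 0 < Q := by
      rcases lt_or_eq_of_le hQ0 with h | h
      · exact h
      · exfalso
        apply hG
        have hz : ∀ x ∈ Finset.univ, d x * (φ x j) ^ 2 = 0 := by
          rw [← Finset.sum_eq_zero_iff_of_nonneg
            (fun x _ => mul_nonneg (hd x) (sq_nonneg _))]
          exact h.symm
        apply Finset.sum_eq_zero
        intro x _
        have hx := hz x (Finset.mem_univ x)
        rcases mul_eq_zero.mp hx with h1 | h2
        · rw [h1]; ring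
        · have : φ x j = 0 := by
            have := sq_eq_zero_iff.mp h2; exact this
          rw [this]; ring
    set s : ℝ := -(G / Q) with hsdef
    set D : Matrix (Fin n) (Fin K) ℝ :=
      fun i k' => if i = j then (if k' = k then s else 0) else 0 with hDdef
    have hinner : ∀ x k', (∑ i, D i k' * φ x i)
        = if k' = k then s * φ x j else 0 := by
      intro x k'
      simp only [hDdef, ite_mul, zero_mul, Finset.sum_ite_eq', Finset.mem_univ, if_true]
    have hcross : (∑ j', ∑ k', D j' k' *
        ∑ x, d x * (φ x j' * ((∑ i, H i k' * φ x i) - t x k'))) = s * G := by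
      rw [Finset.sum_eq_single j, Finset.sum_eq_single k]
      · simp [hDdef]; exact Or.inl rfl
      · intro b _ hb; simp [hDdef, hb]
      · intro h; exact absurd (Finset.mem_univ k) h
      · intro b _ hb; apply Finset.sum_eq_zero; intro k' _; simp [hDdef, hb]
      · intro h; exact absurd (Finset.mem_univ j) h
    have hquad : (∑ x, d x * ∑ k', (∑ i, D i k' * φ x i) ^ 2) = s ^ 2 * Q := by
      simp only [hinner]
      rw [hQdef, Finset.mul_sum]
      apply Finset.sum_congr rfl
      intro x _
      have : ∀ k' : Fin K, (if k' = k then s * φ x j else 0) ^ 2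
          = if k' = k then (s * φ x j) ^ 2 else 0 := by
        intro k'; split <;> simp
      simp only [this]
      rw [Finset.sum_ite_eq' Finset.univ k (fun _ => (s * φ x j) ^ 2)]
      simp only [Finset.mem_univ, if_true]
      ring
    have hexp := expand_lsq d φ t H D
    rw [hcross, hquad] at hexp
    have hkey := hmin (H + D)
    have hHD : ∑ x, d x * ∑ k, ((∑ i, (H + D) i k * φ x i) - t x k) ^ 2
        = ∑ x, d x * ∑ k, ((∑ i, (H i k + D i k) * φ x i) - t x k) ^ 2 := rfl
    rw [hHD, hexp] at hkey
    have hsG : 2 * (s * G) + s ^ 2 * Q = -(G ^ 2 / Q) := by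
      rw [hsdef]
      field_simp
      ring
    have hG2 : 0 < G ^ 2 / Q := div_pos (by positivity) hQpos
    clear_value D s Q G
    linarith [hkey, hsG, hG2]
  · intro hG H'
    have hexp := expand_lsq d φ t H (H' - H)
    have hHD : ∑ x, d x * ∑ k, ((∑ i, H' i k * φ x i) - t x k) ^ 2
        = ∑ x, d x * ∑ k, ((∑ i, (H i k + (H' - H) i k) * φ x i) - t x k) ^ 2 := by
      apply Finset.sum_congr rfl; intro x _
      congr 1
      apply Finset.sum_congr rfl; intro k _
      congr 2
      apply Finset.sum_congr rfl; intro i _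
      congr 1
      simp [Matrix.sub_apply]
    rw [hHD, hexp]
    have hz : (∑ j, ∑ k, (H' - H) j k *
        ∑ x, d x * (φ x j * ((∑ i, H i k * φ x i) - t x k))) = 0 := by
      apply Finset.sum_eq_zero; intro j _
      apply Finset.sum_eq_zero; intro k _
      rw [hG j k]; ring
    rw [hz]
    have hq : 0 ≤ ∑ x, d x * ∑ k, (∑ i, (H' - H) i k * φ x i) ^ 2 :=
      Finset.sum_nonneg fun x _ => mul_nonneg (hd x)
        (Finset.sum_nonneg fun k _ => sq_nonneg _)
    linarith

/-- The fixed points of the projected Bellman update are exactly the solutions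
of A·H = B; if A is invertible, H* = A⁻¹·B is the unique fixed point. -/
theorem stmt_6 {X : Type*} [Fintype X] {n_f K : ℕ}
    (d : X → ℝ) (hd : ∀ x, 0 ≤ d x)
    (g : X → X → ℝ)  -- g x x' = g(x' | x)
    (hg0 : ∀ x x', 0 ≤ g x x') (hg1 : ∀ x, ∑ x', g x x' = 1)
    (γ : ℝ) (hγ0 : 0 ≤ γ) (hγ1 : γ < 1)
    (φ : X → Fin n_f → ℝ) (c : X → Fin K → ℝ)
    (hGram : IsUnit (∑ x, d x • Matrix.vecMulVec (φ x) (φ x)))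
    (A : Matrix (Fin n_f) (Fin n_f) ℝ)
    (hA : A = ∑ x, d x • Matrix.vecMulVec (φ x)
      (fun i => φ x i - γ * ∑ x', g x x' * φ x' i))
    (B : Matrix (Fin n_f) (Fin K) ℝ)
    (hB : B = ∑ x, d x • Matrix.vecMulVec (φ x) (c x)) :
    (∀ H : Matrix (Fin n_f) (Fin K) ℝ,
      -- H is a fixed point of the projected update T, i.e. H minimizes the
      -- weighted least-squares objective of the Bellman target built from H
      (∀ H' : Matrix (Fin n_f) (Fin K) ℝ,
        ∑ x, d x * ∑ k, ((∑ i, H i k * φ x i) - c x k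
            - γ * ∑ x', g x x' * ∑ i, H i k * φ x' i) ^ 2
          ≤ ∑ x, d x * ∑ k, ((∑ i, H' i k * φ x i) - c x k
            - γ * ∑ x', g x x' * ∑ i, H i k * φ x' i) ^ 2)
        ↔ A * H = B) ∧
    (IsUnit A →
      ∀ H : Matrix (Fin n_f) (Fin K) ℝ,
        (∀ H' : Matrix (Fin n_f) (Fin K) ℝ,
          ∑ x, d x * ∑ k, ((∑ i, H i k * φ x i) - c x k
              - γ * ∑ x', g x x' * ∑ i, H i k * φ x' i) ^ 2
            ≤ ∑ x, d x * ∑ k, ((∑ i, H' i k * φ x i) - c x k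
              - γ * ∑ x', g x x' * ∑ i, H i k * φ x' i) ^ 2)
          ↔ H = A⁻¹ * B) := by
  have main : ∀ H : Matrix (Fin n_f) (Fin K) ℝ,
      (∀ H' : Matrix (Fin n_f) (Fin K) ℝ,
        ∑ x, d x * ∑ k, ((∑ i, H i k * φ x i) - c x k
            - γ * ∑ x', g x x' * ∑ i, H i k * φ x' i) ^ 2
          ≤ ∑ x, d x * ∑ k, ((∑ i, H' i k * φ x i) - c x k
            - γ * ∑ x', g x x' * ∑ i, H i k * φ x' i) ^ 2)
        ↔ A * H = B := by
    intro H
    set t : X → Fin K → ℝ :=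
      fun x k => c x k + γ * ∑ x', g x x' * ∑ i, H i k * φ x' i with htdef
    have hrw : ∀ (H' : Matrix (Fin n_f) (Fin K) ℝ) (x : X) (k : Fin K),
        ((∑ i, H' i k * φ x i) - c x k - γ * ∑ x', g x x' * ∑ i, H i k * φ x' i)
          = ((∑ i, H' i k * φ x i) - t x k) := by
      intro H' x k; rw [htdef]; ring
    have hAB : ∀ (j : Fin n_f) (k : Fin K), (A * H) j k - B j k
        = ∑ x, d x * (φ x j * ((∑ i, H i k * φ x i) - t x k)) := by
      intro j k
      rw [htdef, hA, hB]
      simp only [Matrix.mul_apply, Matrix.sum_apply, Matrix.smul_apply,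
        Matrix.vecMulVec_apply, smul_eq_mul]
      have swap1 : ∀ x, ∑ i, (∑ x', g x x' * φ x' i) * H i k
          = ∑ x', g x x' * ∑ i, H i k * φ x' i := by
        intro x
        simp only [Finset.sum_mul, Finset.mul_sum]
        rw [Finset.sum_comm]
        exact Finset.sum_congr rfl fun x' _ => Finset.sum_congr rfl fun i _ => by ring
      have swap2 : (∑ i, (∑ x, d x * (φ x j * (φ x i - γ * ∑ x', g x x' * φ x' i))) * H i k)
          = ∑ x, ∑ i, (d x * (φ x j * (φ x i - γ * ∑ x', g x x' * φ x' i))) * H i k := by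
        simp only [Finset.sum_mul]
        exact Finset.sum_comm
      rw [swap2, ← Finset.sum_sub_distrib]
      apply Finset.sum_congr rfl
      intro x _
      have expand : ∀ i, (d x * (φ x j * (φ x i - γ * ∑ x', g x x' * φ x' i))) * H i k
          = d x * φ x j * (H i k * φ x i)
            - d x * φ x j * γ * ((∑ x', g x x' * φ x' i) * H i k) := fun i => by ring
      simp only [expand]
      rw [Finset.sum_sub_distrib, ← Finset.mul_sum, ← Finset.mul_sum, swap1 x]
      ring
    calc (∀ H' : Matrix (Fin n_f) (Fin K) ℝ,
        ∑ x, d x * ∑ k, ((∑ i, H i k * φ x i) - c x k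
            - γ * ∑ x', g x x' * ∑ i, H i k * φ x' i) ^ 2
          ≤ ∑ x, d x * ∑ k, ((∑ i, H' i k * φ x i) - c x k
            - γ * ∑ x', g x x' * ∑ i, H i k * φ x' i) ^ 2)
        ↔ (∀ H' : Matrix (Fin n_f) (Fin K) ℝ,
          ∑ x, d x * ∑ k, ((∑ i, H i k * φ x i) - t x k) ^ 2
            ≤ ∑ x, d x * ∑ k, ((∑ i, H' i k * φ x i) - t x k) ^ 2) := by
          simp only [hrw]
      _ ↔ (∀ j k, ∑ x, d x * (φ x j * ((∑ i, H i k * φ x i) - t x k)) = 0) :=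
          lsq_iff d hd φ t H
      _ ↔ A * H = B := by
          rw [← Matrix.ext_iff]
          constructor
          · intro h j k
            have h0 := hAB j k
            rw [h j k] at h0
            linarith
          · intro h j k
            rw [← hAB j k, h]
            ring
  refine ⟨main, fun hU H => ?_⟩
  rw [main H]
  have hdet : IsUnit A.det := (Matrix.isUnit_iff_isUnit_det A).mp hU
  constructor
  · intro h
    rw [← h, ← Matrix.mul_assoc, Matrix.nonsing_inv_mul A hdet, Matrix.one_mul]
  · intro h
    rw [h, ← Matrix.mul_assoc, Matrix.mul_nonsing_inv A hdet, Matrix.one_mul]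
end

section
/- Let X be a nonempty finite type, d : X → ℝ weights with d(x) > 0, φ : X → ℝ^{n_f}, F : X → ℝ^K, H* ∈ ℝ^{n_f×K} with columns h*_1,…,h*_K, and C ≥ 0. If for every k ∈ {1,…,K} the scalar bound ‖(x ↦ ⟪φ(x), h*_k⟫) − F_k‖_d ≤ C·⨅_{h ∈ ℝ^{n_f}} ‖(x ↦ ⟪φ(x), h⟫) − F_k‖_d holds, where F_k(x) is the k-th coordinate of F(x), then the matrix bound ‖(x ↦ (H*)ᵀφ(x)) − F‖_d ≤ C·⨅_{H ∈ ℝ^{n_f×K}} ‖(x ↦ Hᵀφ(x)) − F‖_d holds. -/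
open Finset

/-- Column-wise quasi-optimality bounds imply the matrix-level
quasi-optimality bound in the weighted norm. -/
theorem stmt_7 {X : Type*} [Fintype X] [Nonempty X] {n_f K : ℕ}
    (d : X → ℝ) (hd : ∀ x, 0 < d x)
    (φ : X → Fin n_f → ℝ) (F : X → Fin K → ℝ)
    (Hstar : Matrix (Fin n_f) (Fin K) ℝ) (C : ℝ) (hC : 0 ≤ C)
    (hcol : ∀ k : Fin K,
      Real.sqrt (∑ x, d x * ((∑ i, φ x i * Hstar i k) - F x k) ^ 2)
        ≤ C * ⨅ h : Fin n_f → ℝ,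
            Real.sqrt (∑ x, d x * ((∑ i, φ x i * h i) - F x k) ^ 2)) :
    Real.sqrt (∑ x, d x * ∑ k, ((∑ i, φ x i * Hstar i k) - F x k) ^ 2)
      ≤ C * ⨅ H : Matrix (Fin n_f) (Fin K) ℝ,
          Real.sqrt (∑ x, d x * ∑ k, ((∑ i, φ x i * H i k) - F x k) ^ 2) := by
  set m : Fin K → ℝ := fun k => ⨅ h : Fin n_f → ℝ,
      Real.sqrt (∑ x, d x * ((∑ i, φ x i * h i) - F x k) ^ 2) with hm
  have hm0 : ∀ k, 0 ≤ m k := fun k =>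
    Real.iInf_nonneg (fun _ => Real.sqrt_nonneg _)
  have hsnonneg : ∀ k : Fin K,
      0 ≤ ∑ x, d x * ((∑ i, φ x i * Hstar i k) - F x k) ^ 2 := fun k =>
    Finset.sum_nonneg fun x _ => mul_nonneg (hd x).le (sq_nonneg _)
  -- Step 1: LHS ≤ C * sqrt (∑ k, (m k)^2)
  have step1 : Real.sqrt (∑ x, d x * ∑ k, ((∑ i, φ x i * Hstar i k) - F x k) ^ 2)
      ≤ C * Real.sqrt (∑ k, (m k) ^ 2) := by
    have hswap : (∑ x, d x * ∑ k, ((∑ i, φ x i * Hstar i k) - F x k) ^ 2)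
        = ∑ k, ∑ x, d x * ((∑ i, φ x i * Hstar i k) - F x k) ^ 2 := by
      simp_rw [Finset.mul_sum]
      exact Finset.sum_comm
    rw [hswap]
    have hbound : ∀ k : Fin K,
        (∑ x, d x * ((∑ i, φ x i * Hstar i k) - F x k) ^ 2) ≤ C ^ 2 * (m k) ^ 2 := by
      intro k
      have h1 := hcol k
      have h2 : (Real.sqrt (∑ x, d x * ((∑ i, φ x i * Hstar i k) - F x k) ^ 2)) ^ 2
          ≤ (C * m k) ^ 2 :=
        pow_le_pow_left₀ (Real.sqrt_nonneg _) h1 2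
      rw [Real.sq_sqrt (hsnonneg k)] at h2
      calc (∑ x, d x * ((∑ i, φ x i * Hstar i k) - F x k) ^ 2) ≤ (C * m k) ^ 2 := h2
        _ = C ^ 2 * (m k) ^ 2 := by ring
    calc Real.sqrt (∑ k, ∑ x, d x * ((∑ i, φ x i * Hstar i k) - F x k) ^ 2)
        ≤ Real.sqrt (∑ k, C ^ 2 * (m k) ^ 2) := by
          apply Real.sqrt_le_sqrt
          exact Finset.sum_le_sum fun k _ => hbound k
      _ = C * Real.sqrt (∑ k, (m k) ^ 2) := by
          rw [← Finset.mul_sum, Real.sqrt_mul (sq_nonneg C),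
            Real.sqrt_sq hC]
  -- Step 2: sqrt (∑ k, (m k)^2) ≤ f H for every H
  have step2 : ∀ H : Matrix (Fin n_f) (Fin K) ℝ,
      Real.sqrt (∑ k, (m k) ^ 2)
        ≤ Real.sqrt (∑ x, d x * ∑ k, ((∑ i, φ x i * H i k) - F x k) ^ 2) := by
    intro H
    have hswap : (∑ x, d x * ∑ k, ((∑ i, φ x i * H i k) - F x k) ^ 2)
        = ∑ k, ∑ x, d x * ((∑ i, φ x i * H i k) - F x k) ^ 2 := by
      simp_rw [Finset.mul_sum]
      exact Finset.sum_comm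
    rw [hswap]
    apply Real.sqrt_le_sqrt
    apply Finset.sum_le_sum
    intro k _
    have hmk : m k ≤ Real.sqrt (∑ x, d x * ((∑ i, φ x i * H i k) - F x k) ^ 2) := by
      rw [hm]
      exact ciInf_le ⟨0, fun y ⟨h, hy⟩ => hy ▸ Real.sqrt_nonneg _⟩ (fun i => H i k)
    have := pow_le_pow_left₀ (hm0 k) hmk 2
    rwa [Real.sq_sqrt (Finset.sum_nonneg fun x _ =>
      mul_nonneg (hd x).le (sq_nonneg _))] at this
  -- conclude
  have step3 : Real.sqrt (∑ k, (m k) ^ 2)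
      ≤ ⨅ H : Matrix (Fin n_f) (Fin K) ℝ,
          Real.sqrt (∑ x, d x * ∑ k, ((∑ i, φ x i * H i k) - F x k) ^ 2) :=
    le_ciInf step2
  calc Real.sqrt (∑ x, d x * ∑ k, ((∑ i, φ x i * Hstar i k) - F x k) ^ 2)
      ≤ C * Real.sqrt (∑ k, (m k) ^ 2) := step1
    _ ≤ _ := mul_le_mul_of_nonneg_left step3 hC
end

section
/- Let V be a finite-dimensional real inner product space, S ⊆ V a subspace, and Ψ the orthogonal projection of V onto S. Let M : V → V be a linear map, γ ∈ [0,1) and κ ≥ 0 such that (i) ‖Ψ(M u)‖ ≤ ‖u‖ for every u ∈ S and (ii) ‖M v‖ ≤ κ·‖v‖ for every v ∈ V. Suppose f, c ∈ V satisfy f = c + γ·M f, and f̂ ∈ S satisfies f̂ = Ψ(c + γ·M f̂). Then ‖f̂ − f‖ ≤ ((1+γ·κ)/(1−γ))·‖Ψ f − f‖, and consequently ‖f̂ − f‖ ≤ ((1+γ·κ)/(1−γ))·⨅_{g ∈ S} ‖g − f‖. -/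
/-- Abstract quasi-optimality bound for projected fixed points (Kolter-style
bound in an inner product space). -/
theorem stmt_8 {V : Type*} [NormedAddCommGroup V] [InnerProductSpace ℝ V]
    [FiniteDimensional ℝ V]
    (S : Submodule ℝ V) (M : V →ₗ[ℝ] V)
    (γ κ : ℝ) (hγ0 : 0 ≤ γ) (hγ1 : γ < 1) (hκ : 0 ≤ κ)
    (hi : ∀ u ∈ S, ‖(Submodule.orthogonalProjectionOnto S (M u) : V)‖ ≤ ‖u‖)
    (hii : ∀ v : V, ‖M v‖ ≤ κ * ‖v‖)
    (f c fhat : V)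
    (hf : f = c + γ • M f)
    (hfhatS : fhat ∈ S)
    (hfhat : fhat = (Submodule.orthogonalProjectionOnto S (c + γ • M fhat) : V)) :
    ‖fhat - f‖ ≤ ((1 + γ * κ) / (1 - γ)) * ‖(Submodule.orthogonalProjectionOnto S f : V) - f‖ ∧
    ‖fhat - f‖ ≤ ((1 + γ * κ) / (1 - γ)) * ⨅ g : S, ‖(g : V) - f‖ := by
  set P := Submodule.orthogonalProjectionOnto S with hP
  have hγpos : 0 < 1 - γ := by linarith
  -- norm of projection is at most norm
  have hPle : ∀ x : V, ‖(P x : V)‖ ≤ ‖x‖ := by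
    intro x
    calc ‖(P x : V)‖ = ‖P x‖ := rfl
    _ ≤ ‖P‖ * ‖x‖ := (P : V →L[ℝ] S).le_opNorm x
    _ ≤ 1 * ‖x‖ := by
        exact mul_le_mul_of_nonneg_right (Submodule.orthogonalProjectionOnto_norm_le S) (norm_nonneg x)
    _ = ‖x‖ := one_mul _
  set e := fhat - (P f : V) with he
  have heS : e ∈ S := S.sub_mem hfhatS (P f).2
  -- key identity
  have hkey : e = γ • (P (M (fhat - f)) : V) := by
    have h1 : (P f : V) = (P (c + γ • M f) : V) := by rw [← hf]
    have : fhat - (P f : V) = (P (c + γ • M fhat) : V) - (P (c + γ • M f) : V) := by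
      rw [← hfhat, ← h1]
    rw [he, this, ← Submodule.coe_sub, ← map_sub]
    have h2 : (c + γ • M fhat) - (c + γ • M f) = γ • M (fhat - f) := by
      rw [map_sub]; module
    rw [h2, map_smul, Submodule.coe_smul]
  have hsplit : fhat - f = e + ((P f : V) - f) := by rw [he]; abel
  have hstep : ‖e‖ ≤ γ * ‖e‖ + γ * κ * ‖(P f : V) - f‖ := by
    have hMsplit : M (fhat - f) = M e + M ((P f : V) - f) := by
      rw [hsplit, map_add]
    calc ‖e‖ = γ * ‖(P (M (fhat - f)) : V)‖ := by
          rw [hkey, norm_smul, Real.norm_of_nonneg hγ0]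
      _ = γ * ‖(P (M e) : V) + (P (M ((P f : V) - f)) : V)‖ := by
          rw [hMsplit, map_add, Submodule.coe_add]
      _ ≤ γ * (‖(P (M e) : V)‖ + ‖(P (M ((P f : V) - f)) : V)‖) := by
          exact mul_le_mul_of_nonneg_left (norm_add_le _ _) hγ0
      _ ≤ γ * (‖e‖ + κ * ‖(P f : V) - f‖) := by
          refine mul_le_mul_of_nonneg_left (add_le_add (hi e heS) ?_) hγ0
          exact (hPle _).trans (hii _)
      _ = γ * ‖e‖ + γ * κ * ‖(P f : V) - f‖ := by ring
  have he_bound : ‖e‖ ≤ (γ * κ / (1 - γ)) * ‖(P f : V) - f‖ := by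
    rw [div_mul_eq_mul_div, le_div_iff₀ hγpos]
    nlinarith [norm_nonneg e, norm_nonneg ((P f : V) - f)]
  have hmain : ‖fhat - f‖ ≤ ((1 + γ * κ) / (1 - γ)) * ‖(P f : V) - f‖ := by
    calc ‖fhat - f‖ ≤ ‖e‖ + ‖(P f : V) - f‖ := by rw [hsplit]; exact norm_add_le _ _
      _ ≤ (γ * κ / (1 - γ)) * ‖(P f : V) - f‖ + ‖(P f : V) - f‖ := by
          exact add_le_add_left he_bound _
      _ = ((1 - γ + γ * κ) / (1 - γ)) * ‖(P f : V) - f‖ := by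
          field_simp; ring
      _ ≤ ((1 + γ * κ) / (1 - γ)) * ‖(P f : V) - f‖ := by
          gcongr
          linarith
  refine ⟨hmain, ?_⟩
  have hinf : ‖(P f : V) - f‖ = ⨅ g : S, ‖(g : V) - f‖ := by
    rw [norm_sub_rev]
    rw [hP, ← Submodule.starProjection_apply, Submodule.starProjection_minimal]
    exact iInf_congr fun g => norm_sub_rev _ _
  rwa [← hinf]
end

section
/- Let M ∈ ℝ^{N×N} be a row-stochastic matrix, γ, λ ∈ [0,1), and C, ν ∈ ℝ^{N×K} with ν = γ·M·(C + ν). Then the series ∑_{n=0}^∞ λⁿ·γⁿ·Mⁿ·(C + (1−λ)·ν) converges and its sum equals C + ν. -/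
open Finset

attribute [local instance] Matrix.linftyOpNormedAddCommGroup
  Matrix.linftyOpNormedSpace Matrix.linftyOpNormedRing

/-- Eligibility-trace (λ-return) form of the policy gradient in matrix
notation: the λ-weighted Neumann-type series recovers C + ν. -/
theorem stmt_14 {N K : ℕ}
    (M : Matrix (Fin N) (Fin N) ℝ)
    (hM0 : ∀ i j, 0 ≤ M i j) (hM1 : ∀ i, ∑ j, M i j = 1)
    (γ lam : ℝ) (hγ0 : 0 ≤ γ) (hγ1 : γ < 1) (hlam0 : 0 ≤ lam) (hlam1 : lam < 1)
    (C ν : Matrix (Fin N) (Fin K) ℝ)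
    (hν : ν = γ • (M * (C + ν))) :
    HasSum (fun n : ℕ => (lam ^ n * γ ^ n) • (M ^ n * (C + (1 - lam) • ν)))
      (C + ν) := by
  set A : Matrix (Fin N) (Fin N) ℝ := (lam * γ) • M with hA
  set D : Matrix (Fin N) (Fin K) ℝ := C + ν with hD
  set D' : Matrix (Fin N) (Fin K) ℝ := C + (1 - lam) • ν with hD'
  have hq0 : 0 ≤ lam * γ := mul_nonneg hlam0 hγ0
  have hq1 : lam * γ < 1 :=
    lt_of_le_of_lt (mul_le_of_le_one_right hlam0 hγ1.le) hlam1
  -- key rewriting of the terms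
  have hterm : ∀ n : ℕ, (lam ^ n * γ ^ n) • (M ^ n * D') = A ^ n * D' := by
    intro n
    rw [hA, smul_pow, Matrix.smul_mul, mul_pow]
  -- A * D = lam • ν
  have hAD : A * D = lam • ν := by
    rw [hA, Matrix.smul_mul]
    rw [hν, smul_smul]
  have hDsub : D - A * D = D' := by
    rw [hAD, hD, hD', sub_smul, one_smul]
    abel
  -- norm of M is at most 1
  have hMnorm : ‖M‖ ≤ 1 := by
    rw [Matrix.linfty_opNorm_def]
    have hrow : ∀ i, (∑ j, ‖M i j‖₊) = (1 : NNReal) := by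
      intro i
      apply NNReal.coe_injective
      push_cast
      have : ∀ j, ‖M i j‖ = M i j := fun j => by
        simp [Real.norm_eq_abs, abs_of_nonneg (hM0 i j)]
      rw [Finset.sum_congr rfl fun j _ => this j, hM1 i]
    have : (Finset.univ.sup fun i => ∑ j, ‖M i j‖₊ : NNReal) ≤ 1 :=
      Finset.sup_le fun i _ => (hrow i).le
    exact_mod_cast this
  have hAn : ∀ n : ℕ, ‖A ^ n‖ ≤ (lam * γ) ^ n := by
    intro n
    induction n with
    | zero =>
      rw [pow_zero, pow_zero, ← Matrix.diagonal_one, Matrix.linfty_opNorm_diagonal]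
      refine (pi_norm_le_iff_of_nonneg zero_le_one).2 fun i => ?_
      simp
    | succ n ih =>
      calc ‖A ^ (n + 1)‖ = ‖A ^ n * A‖ := by rw [pow_succ]
        _ ≤ ‖A ^ n‖ * ‖A‖ := norm_mul_le _ _
        _ ≤ (lam * γ) ^ n * ((lam * γ) * 1) := by
            apply mul_le_mul ih _ (norm_nonneg _) (pow_nonneg hq0 n)
            rw [hA, norm_smul, Real.norm_eq_abs, abs_of_nonneg hq0]
            exact mul_le_mul_of_nonneg_left hMnorm hq0
        _ = (lam * γ) ^ (n + 1) := by ring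
  -- summability
  have hbound : ∀ n : ℕ, ‖A ^ n * D'‖ ≤ (lam * γ) ^ n * ‖D'‖ := by
    intro n
    calc ‖A ^ n * D'‖ ≤ ‖A ^ n‖ * ‖D'‖ := Matrix.linfty_opNorm_mul _ _
      _ ≤ (lam * γ) ^ n * ‖D'‖ :=
        mul_le_mul_of_nonneg_right (hAn n) (norm_nonneg _)
  have hsummable : Summable (fun n : ℕ => A ^ n * D') := by
    apply Summable.of_norm_bounded (Summable.mul_right ‖D'‖
      (summable_geometric_of_lt_one hq0 hq1)) hbound
  -- partial sums telescope
  have hpartial : ∀ n : ℕ, ∑ k ∈ Finset.range n, A ^ k * D' = D - A ^ n * D := by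
    intro n
    induction n with
    | zero => simp
    | succ n ih =>
      rw [Finset.sum_range_succ, ih, ← hDsub]
      rw [Matrix.mul_sub, ← Matrix.mul_assoc, ← pow_succ]
      abel
  -- A ^ n * D → 0
  have htend0 : Filter.Tendsto (fun n : ℕ => A ^ n * D) Filter.atTop (nhds 0) := by
    refine tendsto_zero_iff_norm_tendsto_zero.2 ?_
    apply squeeze_zero (fun n => norm_nonneg _)
      (fun n => le_trans (Matrix.linfty_opNorm_mul _ _)
        (mul_le_mul_of_nonneg_right (hAn n) (norm_nonneg _)))
    simpa using (tendsto_pow_atTop_nhds_zero_of_lt_one hq0 hq1).mul_const ‖D‖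
  have htends : Filter.Tendsto (fun n : ℕ => ∑ k ∈ Finset.range n, A ^ k * D')
      Filter.atTop (nhds D) := by
    simp only [hpartial]
    have : Filter.Tendsto (fun n : ℕ => D - A ^ n * D) Filter.atTop (nhds (D - 0)) :=
      tendsto_const_nhds.sub htend0
    simpa using this
  have hhs : HasSum (fun n : ℕ => A ^ n * D') D := by
    have h1 := hsummable.hasSum
    have h2 := h1.tendsto_sum_nat
    have := tendsto_nhds_unique h2 htends
    rwa [this] at h1
  simpa only [hterm, hD] using hhs
end

section
/- Let E be a real Banach space, γ, λ ∈ [0,1), and (y_n)_{n≥0}, (z_n)_{n≥0} sequences in E that are bounded in norm. Then the series ∑_{n=0}^∞ λⁿ·(∑_{t=0}^{n} γᵗ·y_t + γⁿ·z_n) and ∑_{n=0}^∞ λⁿ·γⁿ·(y_n + (1−λ)·z_n) both converge, and (1−λ)·∑_{n=0}^∞ λⁿ·(∑_{t=0}^{n} γᵗ·y_t + γⁿ·z_n) = ∑_{n=0}^∞ λⁿ·γⁿ·(y_n + (1−λ)·z_n). -/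
open Finset

/-- Abel shift: (1-λ) ∑ λⁿ Pₙ = ∑ λⁿ aₙ where Pₙ is the n-th partial sum. -/
lemma abel_shift {E : Type*} [NormedAddCommGroup E] [NormedSpace ℝ E]
    [CompleteSpace E] (lam : ℝ) (a : ℕ → E)
    (h1 : Summable fun n => lam ^ n • (∑ t ∈ Finset.range (n + 1), a t))
    (h2 : Summable fun n => lam ^ n • a n) :
    (1 - lam) • (∑' n, lam ^ n • (∑ t ∈ Finset.range (n + 1), a t))
      = ∑' n, lam ^ n • a n := by
  set P : ℕ → E := fun n => ∑ t ∈ Finset.range (n + 1), a t with hP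
  have h1' : Summable fun n => lam ^ (n + 1) • P (n + 1) :=
    (summable_nat_add_iff (f := fun n => lam ^ n • P n) 1).mpr h1
  have h1'' : Summable fun n => lam ^ (n + 1) • P n := by
    have := h1.const_smul lam
    simpa [smul_smul, ← pow_succ'] using this
  have hS : (∑' n, lam ^ n • P n)
      = lam ^ 0 • P 0 + ∑' n, lam ^ (n + 1) • P (n + 1) := Summable.tsum_eq_zero_add h1
  have hlamS : lam • (∑' n, lam ^ n • P n) = ∑' n, lam ^ (n + 1) • P n := by
    rw [← Summable.tsum_const_smul lam h1]
    congr 1; funext n; rw [smul_smul, ← pow_succ']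
  have key : (∑' n, lam ^ n • P n) - lam • (∑' n, lam ^ n • P n)
      = ∑' n, lam ^ n • a n := by
    rw [hlamS, hS, add_sub_assoc, ← Summable.tsum_sub h1' h1'']
    have hd : ∀ n : ℕ, lam ^ (n + 1) • P (n + 1) - lam ^ (n + 1) • P n
        = lam ^ (n + 1) • a (n + 1) := by
      intro n
      rw [← smul_sub]
      congr 1
      simp [hP, Finset.sum_range_succ]
    rw [Summable.tsum_eq_zero_add h2]
    simp only [hd, pow_zero, one_smul]
    congr 1
    simp [hP]
  rw [sub_smul, one_smul, key]

/-- λ-weighted average of the n-step policy-gradient expressions yields the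
eligibility-trace form of the policy gradient. -/
theorem stmt_15 {E : Type*} [NormedAddCommGroup E] [NormedSpace ℝ E]
    [CompleteSpace E]
    (γ lam : ℝ) (hγ0 : 0 ≤ γ) (hγ1 : γ < 1) (hlam0 : 0 ≤ lam) (hlam1 : lam < 1)
    (y z : ℕ → E)
    (hy : ∃ Cy : ℝ, ∀ n, ‖y n‖ ≤ Cy) (hz : ∃ Cz : ℝ, ∀ n, ‖z n‖ ≤ Cz) :
    Summable (fun n : ℕ =>
      lam ^ n • ((∑ t ∈ Finset.range (n + 1), γ ^ t • y t) + γ ^ n • z n)) ∧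
    Summable (fun n : ℕ => (lam ^ n * γ ^ n) • (y n + (1 - lam) • z n)) ∧
    (1 - lam) • (∑' n : ℕ,
        lam ^ n • ((∑ t ∈ Finset.range (n + 1), γ ^ t • y t) + γ ^ n • z n))
      = ∑' n : ℕ, (lam ^ n * γ ^ n) • (y n + (1 - lam) • z n) := by
  obtain ⟨Cy, hCy⟩ := hy
  obtain ⟨Cz, hCz⟩ := hz
  set Cy' := max Cy 0 with hCy'
  set Cz' := max Cz 0 with hCz'
  have hCy0 : 0 ≤ Cy' := le_max_right _ _
  have hCz0 : 0 ≤ Cz' := le_max_right _ _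
  have hCy2 : ∀ n, ‖y n‖ ≤ Cy' := fun n => (hCy n).trans (le_max_left _ _)
  have hCz2 : ∀ n, ‖z n‖ ≤ Cz' := fun n => (hCz n).trans (le_max_left _ _)
  have hγ1' : 0 < 1 - γ := by linarith
  have hlg0 : 0 ≤ lam * γ := mul_nonneg hlam0 hγ0
  have hlg1 : lam * γ < 1 :=
    lt_of_le_of_lt (mul_le_of_le_one_right hlam0 hγ1.le) hlam1
  have hgeom_lam : Summable fun n : ℕ => lam ^ n :=
    summable_geometric_of_lt_one hlam0 hlam1
  have hgeom_lg : Summable fun n : ℕ => (lam * γ) ^ n :=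
    summable_geometric_of_lt_one hlg0 hlg1
  set P : ℕ → E := fun n => ∑ t ∈ Finset.range (n + 1), γ ^ t • y t with hPdef
  -- bound on partial sums
  have hPbound : ∀ n : ℕ, ‖P n‖ ≤ Cy' / (1 - γ) := by
    intro n
    calc ‖P n‖ ≤ ∑ t ∈ Finset.range (n + 1), ‖γ ^ t • y t‖ := norm_sum_le _ _
      _ ≤ ∑ t ∈ Finset.range (n + 1), γ ^ t * Cy' := by
          apply Finset.sum_le_sum
          intro t _
          rw [norm_smul, Real.norm_eq_abs, abs_of_nonneg (pow_nonneg hγ0 t)]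
          exact mul_le_mul_of_nonneg_left (hCy2 t) (pow_nonneg hγ0 t)
      _ = (∑ t ∈ Finset.range (n + 1), γ ^ t) * Cy' := by
          rw [Finset.sum_mul]
      _ ≤ (1 / (1 - γ)) * Cy' := by
          apply mul_le_mul_of_nonneg_right _ hCy0
          rw [le_div_iff₀ hγ1']
          nlinarith [geom_sum_mul γ (n + 1), pow_nonneg hγ0 (n + 1)]
      _ = Cy' / (1 - γ) := by ring
  -- summable pieces
  have hA : Summable fun n => lam ^ n • P n := by
    apply Summable.of_norm_bounded (g := fun n => Cy' / (1 - γ) * lam ^ n)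
      (hgeom_lam.mul_left _)
    intro n
    rw [norm_smul, Real.norm_eq_abs, abs_of_nonneg (pow_nonneg hlam0 n),
      mul_comm]
    exact mul_le_mul_of_nonneg_right (hPbound n) (pow_nonneg hlam0 n)
  have hB : Summable fun n => lam ^ n • γ ^ n • z n := by
    apply Summable.of_norm_bounded (g := fun n => Cz' * (lam * γ) ^ n)
      (hgeom_lg.mul_left _)
    intro n
    rw [smul_smul, ← mul_pow, norm_smul, Real.norm_eq_abs,
      abs_of_nonneg (pow_nonneg hlg0 n), mul_comm]
    exact mul_le_mul_of_nonneg_right (hCz2 n) (pow_nonneg hlg0 n)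
  have hC : Summable fun n => lam ^ n • γ ^ n • y n := by
    apply Summable.of_norm_bounded (g := fun n => Cy' * (lam * γ) ^ n)
      (hgeom_lg.mul_left _)
    intro n
    rw [smul_smul, ← mul_pow, norm_smul, Real.norm_eq_abs,
      abs_of_nonneg (pow_nonneg hlg0 n), mul_comm]
    exact mul_le_mul_of_nonneg_right (hCy2 n) (pow_nonneg hlg0 n)
  have hB' : Summable fun n => (1 - lam) • lam ^ n • γ ^ n • z n :=
    hB.const_smul (1 - lam)
  have hS1 : Summable (fun n : ℕ => lam ^ n • (P n + γ ^ n • z n)) := by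
    have := hA.add hB
    refine this.congr fun n => ?_
    rw [← smul_add]
  have hS2 : Summable
      (fun n : ℕ => (lam ^ n * γ ^ n) • (y n + (1 - lam) • z n)) := by
    have := hC.add hB'
    refine this.congr fun n => ?_
    module
  refine ⟨hS1, hS2, ?_⟩
  have ht1 : (∑' n : ℕ, lam ^ n • (P n + γ ^ n • z n))
      = (∑' n, lam ^ n • P n) + ∑' n, lam ^ n • γ ^ n • z n := by
    rw [← Summable.tsum_add hA hB]
    exact tsum_congr fun n => by rw [← smul_add]
  have ht2 : (∑' n : ℕ, (lam ^ n * γ ^ n) • (y n + (1 - lam) • z n))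
      = (∑' n, lam ^ n • γ ^ n • y n)
        + ∑' n, (1 - lam) • lam ^ n • γ ^ n • z n := by
    rw [← Summable.tsum_add hC hB']
    exact tsum_congr fun n => by module
  have habel : (1 - lam) • (∑' n, lam ^ n • P n)
      = ∑' n, lam ^ n • γ ^ n • y n :=
    abel_shift lam (fun t => γ ^ t • y t) hA hC
  calc (1 - lam) • (∑' n : ℕ, lam ^ n • (P n + γ ^ n • z n))
      = (1 - lam) • (∑' n, lam ^ n • P n)
        + (1 - lam) • ∑' n, lam ^ n • γ ^ n • z n := by
        rw [ht1, smul_add]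
    _ = (∑' n, lam ^ n • γ ^ n • y n)
        + ∑' n, (1 - lam) • lam ^ n • γ ^ n • z n := by
        rw [habel, Summable.tsum_const_smul (1 - lam) hB]
    _ = _ := ht2.symm
end
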